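/- arXiv:2108.12658 — 15 statements merged into one kernel-verified Lean document; each statement's English description precedes it below -/
import Mathlib

section
/- If T is an n×n stochastic matrix, then its largest singular value satisfies σ₁(T) ≤ √n, with equality if and only if T = 𝟏 e_j^⊤ for some standard basis vector e_j. -/
open Matrix BigOperators

/-- The largest singular value (operator 2-norm) of a real square matrix. -/
noncomputable def sigma1 {ι : Type*} [Fintype ι] (A : Matrix ι ι ℝ) : ℝ :=
  sSup {r : ℝ | ∃ x : ι → ℝ, ∑ i, x i ^ 2 = 1 ∧
    r = Real.sqrt (∑ i, (A.mulVec x i) ^ 2)}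

/-- If `T` is an `n × n` stochastic matrix, then `σ₁(T) ≤ √n`, with equality iff
`T = 𝟏 eⱼᵀ` for some standard basis vector `eⱼ`. -/
theorem stmt0 {n : ℕ} (hn : 0 < n) (T : Matrix (Fin n) (Fin n) ℝ)
    (hpos : ∀ i j, 0 ≤ T i j) (hrow : ∀ i, ∑ j, T i j = 1) :
    sigma1 T ≤ Real.sqrt n ∧
      (sigma1 T = Real.sqrt n ↔
        ∃ j : Fin n, T = Matrix.of fun _ j' => if j' = j then (1 : ℝ) else 0) := by
  haveI : Nonempty (Fin n) := ⟨⟨0, hn⟩⟩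
  set S : Set ℝ := {r : ℝ | ∃ x : Fin n → ℝ, ∑ i, x i ^ 2 = 1 ∧
    r = Real.sqrt (∑ i, (T.mulVec x i) ^ 2)} with hS
  -- entries ≤ 1
  have hle1 : ∀ i j, T i j ≤ 1 := by
    intro i j
    calc T i j ≤ ∑ j', T i j' :=
          Finset.single_le_sum (fun j' _ => hpos i j') (Finset.mem_univ j)
      _ = 1 := hrow i
  -- column sums
  set c : Fin n → ℝ := fun j => ∑ i, T i j with hc
  have hcn : ∀ j, c j ≤ n := by
    intro j
    calc c j = ∑ i, T i j := rfl
      _ ≤ ∑ _i : Fin n, (1 : ℝ) := Finset.sum_le_sum fun i _ => hle1 i j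
      _ = n := by simp
  set M : ℝ := Finset.univ.sup' Finset.univ_nonempty c with hM
  have hcM : ∀ j, c j ≤ M := fun j => Finset.le_sup' c (Finset.mem_univ j)
  have hMn : M ≤ n := Finset.sup'_le _ c fun j _ => hcn j
  -- key bound
  have key : ∀ x : Fin n → ℝ, ∑ i, x i ^ 2 = 1 →
      ∑ i, (T.mulVec x i) ^ 2 ≤ M := by
    intro x hx
    have h1 : ∀ i, (T.mulVec x i) ^ 2 ≤ ∑ j, T i j * x j ^ 2 := by
      intro i
      have cs := Finset.sum_mul_sq_le_sq_mul_sq Finset.univ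
        (fun j => Real.sqrt (T i j)) (fun j => Real.sqrt (T i j) * x j)
      have e1 : ∀ j : Fin n, Real.sqrt (T i j) * (Real.sqrt (T i j) * x j)
          = T i j * x j := by
        intro j
        rw [← mul_assoc, Real.mul_self_sqrt (hpos i j)]
      have e2 : ∀ j : Fin n, Real.sqrt (T i j) ^ 2 = T i j := fun j =>
        Real.sq_sqrt (hpos i j)
      have e3 : ∀ j : Fin n, (Real.sqrt (T i j) * x j) ^ 2 = T i j * x j ^ 2 := by
        intro j
        rw [mul_pow, e2]
      calc (T.mulVec x i) ^ 2 = (∑ j, T i j * x j) ^ 2 := by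
            simp [Matrix.mulVec, dotProduct]
        _ ≤ (∑ j, Real.sqrt (T i j) ^ 2) * ∑ j, (Real.sqrt (T i j) * x j) ^ 2 := by
            simpa only [e1] using cs
        _ = (∑ j, T i j) * ∑ j, T i j * x j ^ 2 := by
            simp only [e2, e3]
        _ = ∑ j, T i j * x j ^ 2 := by rw [hrow i, one_mul]
    calc ∑ i, (T.mulVec x i) ^ 2 ≤ ∑ i, ∑ j, T i j * x j ^ 2 :=
          Finset.sum_le_sum fun i _ => h1 i
      _ = ∑ j, c j * x j ^ 2 := by
          rw [Finset.sum_comm]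
          exact Finset.sum_congr rfl fun j _ => (Finset.sum_mul ..).symm
      _ ≤ ∑ j, M * x j ^ 2 :=
          Finset.sum_le_sum fun j _ => by
            exact mul_le_mul_of_nonneg_right (hcM j) (sq_nonneg _)
      _ = M := by rw [← Finset.mul_sum, hx, mul_one]
  have hSbdd : ∀ r ∈ S, r ≤ Real.sqrt M := by
    rintro r ⟨x, hx, rfl⟩
    exact Real.sqrt_le_sqrt (key x hx)
  have hMn' : Real.sqrt M ≤ Real.sqrt n := Real.sqrt_le_sqrt hMn
  have hbound : sigma1 T ≤ Real.sqrt n :=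
    Real.sSup_le (fun r hr => (hSbdd r hr).trans hMn') (Real.sqrt_nonneg _)
  refine ⟨hbound, ?_, ?_⟩
  · -- forward: equality forces the special form
    intro heq
    have h1 : Real.sqrt (n : ℝ) ≤ Real.sqrt M := by
      rw [← heq]
      exact Real.sSup_le hSbdd (Real.sqrt_nonneg _)
    have h2 : (n : ℝ) ≤ M := by
      have hM0 : (0:ℝ) ≤ M := le_trans
        (Finset.sum_nonneg fun i _ => hpos i (Classical.arbitrary _))
        (hcM (Classical.arbitrary _))
      exact (Real.sqrt_le_sqrt_iff hM0).mp h1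
    obtain ⟨j, _, hj⟩ := Finset.exists_mem_eq_sup' Finset.univ_nonempty c
    have hcj : (n : ℝ) ≤ c j := by rw [← hj]; exact h2
    have hcj' : c j = n := le_antisymm (hcn j) hcj
    -- every entry in column j equals 1
    have hcol : ∀ i, T i j = 1 := by
      have hsum : ∑ i : Fin n, (1 - T i j) = 0 := by
        have hcj'' : ∑ i : Fin n, T i j = (n : ℝ) := hcj'
        rw [Finset.sum_sub_distrib, hcj'']
        simp
      have := (Finset.sum_eq_zero_iff_of_nonneg
        (fun i _ => by linarith [hle1 i j] : ∀ i ∈ Finset.univ, 0 ≤ 1 - T i j)).mp hsum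
      intro i
      have := this i (Finset.mem_univ i)
      linarith
    refine ⟨j, ?_⟩
    ext i j'
    by_cases h : j' = j
    · subst h; simp [hcol i]
    · simp only [Matrix.of_apply, if_neg h]
      -- other entries in row i are 0
      have hz : ∑ j'' ∈ Finset.univ.erase j, T i j'' = 0 := by
        have := Finset.add_sum_erase Finset.univ (T i) (Finset.mem_univ j)
        rw [hrow i, hcol i] at this
        linarith
      have := (Finset.sum_eq_zero_iff_of_nonneg
        (fun k _ => hpos i k)).mp hz j' (Finset.mem_erase.mpr ⟨h, Finset.mem_univ _⟩)
      exact this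
  · -- backward
    rintro ⟨j, rfl⟩
    have hmem : Real.sqrt n ∈ S := by
      refine ⟨fun j' => if j' = j then 1 else 0, by simp, ?_⟩
      have h1 : ∀ i : Fin n,
          ((Matrix.of fun _ j' => if j' = j then (1:ℝ) else 0) *ᵥ
            (fun j' => if j' = j then 1 else 0)) i = 1 := by
        intro i
        simp [Matrix.mulVec, dotProduct]
      simp only [h1]
      simp
    exact le_antisymm hbound
      (le_csSup ⟨Real.sqrt n, fun r hr => (hSbdd r hr).trans hMn'⟩ hmem)
end

section
/- Let T₁, T₂ be n×n stochastic matrices and E = T₁ − T₂, with ε = ‖E‖_∞/2 (where ‖·‖_∞ is the maximum absolute row sum norm). Then E can be written as E = ε·Ẽ where Ẽ = T̃₁ − T̃₂ for some stochastic matrices T̃₁, T̃₂ and ε ∈ [0,1]. -/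
open Matrix BigOperators

/-- The maximum absolute row sum norm `‖·‖_∞` of a matrix. -/
noncomputable def infNorm {ι : Type*} [Fintype ι] (A : Matrix ι ι ℝ) : ℝ :=
  ⨆ i, ∑ j, |A i j|

/-- If `T₁, T₂` are stochastic and `E = T₁ - T₂`, `ε = ‖E‖_∞ / 2`, then `ε ∈ [0,1]` and
`E = ε • Ẽ` where `Ẽ = T̃₁ - T̃₂` for some stochastic matrices `T̃₁, T̃₂`. -/
theorem stmt2 {n : ℕ} (T₁ T₂ : Matrix (Fin n) (Fin n) ℝ)
    (h₁pos : ∀ i j, 0 ≤ T₁ i j) (h₁row : ∀ i, ∑ j, T₁ i j = 1)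
    (h₂pos : ∀ i j, 0 ≤ T₂ i j) (h₂row : ∀ i, ∑ j, T₂ i j = 1)
    (E : Matrix (Fin n) (Fin n) ℝ) (hE : E = T₁ - T₂)
    (ε : ℝ) (hε : ε = infNorm E / 2) :
    0 ≤ ε ∧ ε ≤ 1 ∧
      ∃ Ttil₁ Ttil₂ : Matrix (Fin n) (Fin n) ℝ,
        (∀ i j, 0 ≤ Ttil₁ i j) ∧ (∀ i, ∑ j, Ttil₁ i j = 1) ∧
        (∀ i j, 0 ≤ Ttil₂ i j) ∧ (∀ i, ∑ j, Ttil₂ i j = 1) ∧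
        E = ε • (Ttil₁ - Ttil₂) := by
  have hEr0 : ∀ i, ∑ j, E i j = 0 := by
    intro i
    simp [hE, Matrix.sub_apply, Finset.sum_sub_distrib, h₁row, h₂row]
  have hnn : ∀ i, (0:ℝ) ≤ ∑ j, |E i j| := fun i =>
    Finset.sum_nonneg fun j _ => abs_nonneg _
  have habs : ∀ i, ∑ j, |E i j| ≤ 2 := by
    intro i
    have : ∀ j, |E i j| ≤ T₁ i j + T₂ i j := by
      intro j
      rw [hE]
      simpa using (abs_sub (T₁ i j) (T₂ i j)).trans
        (by rw [abs_of_nonneg (h₁pos i j), abs_of_nonneg (h₂pos i j)])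
    calc ∑ j, |E i j| ≤ ∑ j, (T₁ i j + T₂ i j) :=
          Finset.sum_le_sum fun j _ => this j
      _ = 2 := by rw [Finset.sum_add_distrib, h₁row, h₂row]; norm_num
  have hε0 : 0 ≤ ε := by
    rw [hε]
    exact div_nonneg (Real.iSup_nonneg hnn) (by norm_num)
  have hbdd : BddAbove (Set.range fun i => ∑ j, |E i j|) :=
    (Set.finite_range _).bddAbove
  have hrowle : ∀ i, ∑ j, |E i j| ≤ 2 * ε := by
    intro i
    have h1 := le_ciSup hbdd i
    rw [hε]
    have h2 : 2 * (infNorm E / 2) = infNorm E := by ring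
    rw [h2]
    exact h1
  refine ⟨hε0, ?_, ?_⟩
  · rw [hε, div_le_one (by norm_num : (0:ℝ) < 2)]
    exact Real.iSup_le habs (by norm_num)
  by_cases hz : ε = 0
  · -- E = 0
    have hE0 : E = 0 := by
      ext i j
      have h1 : |E i j| ≤ ∑ k, |E i k| :=
        Finset.single_le_sum (fun k _ => abs_nonneg (E i k)) (Finset.mem_univ j)
      have h2 : ∑ k, |E i k| ≤ 0 := by simpa [hz] using hrowle i
      have : |E i j| ≤ 0 := h1.trans h2
      simpa using abs_nonpos_iff.mp this
    exact ⟨T₁, T₁, h₁pos, h₁row, h₁pos, h₁row, by simp [hE0, hz]⟩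
  · have hεpos : 0 < ε := lt_of_le_of_ne hε0 (Ne.symm hz)
    set P : Matrix (Fin n) (Fin n) ℝ := fun i j => max (E i j) 0 with hP
    set N : Matrix (Fin n) (Fin n) ℝ := fun i j => max (-E i j) 0 with hN
    have hPN : ∀ i j, P i j - N i j = E i j := by
      intro i j
      rcases le_total (E i j) 0 with h | h
      · simp only [hP, hN]; rw [max_eq_right h, max_eq_left (neg_nonneg.mpr h)]; ring
      · simp only [hP, hN]; rw [max_eq_left h, max_eq_right (neg_nonpos.mpr h)]; ring
    have hPNabs : ∀ i j, P i j + N i j = |E i j| := by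
      intro i j
      rcases le_total (E i j) 0 with h | h
      · simp [hP, hN, max_eq_right h, max_eq_left (neg_nonneg.mpr h), abs_of_nonpos h]
      · simp [hP, hN, max_eq_left h, max_eq_right (neg_nonpos.mpr h), abs_of_nonneg h]
    have hPnn : ∀ i j, 0 ≤ P i j := fun i j => le_max_right _ _
    have hNnn : ∀ i j, 0 ≤ N i j := fun i j => le_max_right _ _
    set r : Fin n → ℝ := fun i => ∑ j, P i j with hr
    have hNr : ∀ i, ∑ j, N i j = r i := by
      intro i
      have h0 : ∑ j, (P i j - N i j) = 0 := by
        rw [Finset.sum_congr rfl fun j _ => hPN i j]; exact hEr0 i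
      have := Finset.sum_sub_distrib (f := fun j => P i j) (g := fun j => N i j)
        (s := Finset.univ)
      rw [this] at h0
      linarith [h0]
    have hrle : ∀ i, r i ≤ ε := by
      intro i
      have h2r : 2 * r i = ∑ j, |E i j| := by
        have : ∑ j, (P i j + N i j) = ∑ j, |E i j| :=
          Finset.sum_congr rfl fun j _ => hPNabs i j
        rw [Finset.sum_add_distrib, hNr i] at this
        linarith
      have := hrowle i
      linarith
    refine ⟨fun i j => P i j / ε + (1 - r i / ε) * T₁ i j,
            fun i j => N i j / ε + (1 - r i / ε) * T₁ i j, ?_, ?_, ?_, ?_, ?_⟩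
    · intro i j
      have h1 : 0 ≤ 1 - r i / ε := by
        have : r i / ε ≤ 1 := (div_le_one hεpos).mpr (hrle i)
        linarith
      exact add_nonneg (div_nonneg (hPnn i j) hε0) (mul_nonneg h1 (h₁pos i j))
    · intro i
      rw [Finset.sum_add_distrib, ← Finset.sum_div, ← Finset.mul_sum, h₁row]
      rw [show (∑ j, P i j) = r i from rfl]
      field_simp
      ring
    · intro i j
      have h1 : 0 ≤ 1 - r i / ε := by
        have : r i / ε ≤ 1 := (div_le_one hεpos).mpr (hrle i)
        linarith
      exact add_nonneg (div_nonneg (hNnn i j) hε0) (mul_nonneg h1 (h₁pos i j))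
    · intro i
      rw [Finset.sum_add_distrib, ← Finset.sum_div, ← Finset.mul_sum, h₁row, hNr]
      field_simp
      ring
    · ext i j
      simp only [Matrix.smul_apply, Matrix.sub_apply, Pi.sub_apply, smul_eq_mul]
      have := hPN i j
      show E i j = ε * ((P i j / ε + (1 - r i / ε) * T₁ i j) - (N i j / ε + (1 - r i / ε) * T₁ i j))
      field_simp
      linarith [hPN i j]
end

section
/- Suppose S is an n×n stochastic matrix that is a direct sum of k ≥ 2 stochastic matrices, and T = S + E is another stochastic matrix with ε = ‖E‖_∞/2. Then the matrix I − T has at least k singular values bounded above by 2ε√n; that is, the k-th smallest singular value of I − T is at most 2ε√n. -/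
open Matrix BigOperators
open scoped RealInnerProductSpace

/-- identity map into `EuclideanSpace`. -/
noncomputable def toE {n : ℕ} (x : Fin n → ℝ) : EuclideanSpace ℝ (Fin n) := WithLp.toLp 2 x

theorem toE_eq {n : ℕ} (x : Fin n → ℝ) : toE x = x := rfl

variable {n : ℕ}

theorem mv_dot (M : Matrix (Fin n) (Fin n) ℝ) (x y : Fin n → ℝ) :
    (M *ᵥ x) ⬝ᵥ y = x ⬝ᵥ (Mᴴ *ᵥ y) := by
  simp only [mulVec, dotProduct, conjTranspose_apply, star_trivial, Finset.sum_mul,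
    Finset.mul_sum]
  rw [Finset.sum_comm]
  apply Finset.sum_congr rfl; intros; apply Finset.sum_congr rfl; intros; ring

theorem inner_eq_dot (x y : EuclideanSpace ℝ (Fin n)) :
    ⟪x, y⟫ = (x : Fin n → ℝ) ⬝ᵥ (y : Fin n → ℝ) := by
  simp [PiLp.inner_apply, RCLike.inner_apply, dotProduct]
  exact Finset.sum_congr rfl fun _ _ => mul_comm _ _

/-- expansion of a vector in an orthonormal basis, at the level of plain functions -/
theorem fun_sum_repr (b : OrthonormalBasis (Fin n) ℝ (EuclideanSpace ℝ (Fin n)))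
    (x : EuclideanSpace ℝ (Fin n)) :
    (x : Fin n → ℝ) = ∑ i, b.repr x i • (b i : Fin n → ℝ) := by
  conv_lhs => rw [← b.sum_repr x]
  simp only [WithLp.ofLp_sum, WithLp.ofLp_smul]

theorem norm_expand (b : OrthonormalBasis (Fin n) ℝ (EuclideanSpace ℝ (Fin n)))
    (x : EuclideanSpace ℝ (Fin n)) :
    ⟪x, x⟫ = ∑ i, (b.repr x i)^2 := by
  nth_rewrite 2 [← b.sum_repr x]
  rw [inner_sum]
  apply Finset.sum_congr rfl
  intro i _
  rw [real_inner_smul_right, real_inner_comm, ← b.repr_apply_apply]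
  ring

theorem eq_zero_of_repr_eq_zero (b : OrthonormalBasis (Fin n) ℝ (EuclideanSpace ℝ (Fin n)))
    (x : EuclideanSpace ℝ (Fin n)) (h : ∀ i, b.repr x i = 0) : x = 0 := by
  rw [← b.sum_repr x]
  simp [h]

theorem quad_expand (A : Matrix (Fin n) (Fin n) ℝ) (hA : A.IsHermitian)
    (x : EuclideanSpace ℝ (Fin n)) :
    ⟪x, toE (A *ᵥ x)⟫ = ∑ i, hA.eigenvalues i * (hA.eigenvectorBasis.repr x i)^2 := by
  have hAx : A *ᵥ (x : Fin n → ℝ)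
      = ∑ i, (hA.eigenvalues i * hA.eigenvectorBasis.repr x i) • (hA.eigenvectorBasis i : Fin n → ℝ) := by
    conv_lhs => rw [fun_sum_repr hA.eigenvectorBasis x]
    rw [← Matrix.mulVecLin_apply, map_sum]
    apply Finset.sum_congr rfl
    intro i _
    have h2 : A *ᵥ (hA.eigenvectorBasis i : Fin n → ℝ)
        = hA.eigenvalues i • (hA.eigenvectorBasis i : Fin n → ℝ) := hA.mulVec_eigenvectorBasis i
    rw [_root_.map_smul, Matrix.mulVecLin_apply, h2, smul_smul, mul_comm]
  have : toE (A *ᵥ (x : Fin n → ℝ))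
      = ∑ i, (hA.eigenvalues i * hA.eigenvectorBasis.repr x i) • (hA.eigenvectorBasis i) := by
    rw [hAx, toE, WithLp.toLp_sum]; rfl
  rw [this, inner_sum]
  apply Finset.sum_congr rfl
  intro i _
  rw [real_inner_smul_right, real_inner_comm, ← hA.eigenvectorBasis.repr_apply_apply]
  ring

/-- span of part of an orthonormal basis -/
noncomputable def Wsp (b : OrthonormalBasis (Fin n) ℝ (EuclideanSpace ℝ (Fin n)))
    (s : Finset (Fin n)) : Submodule ℝ (EuclideanSpace ℝ (Fin n)) :=
  Submodule.span ℝ (Set.range fun i : {x // x ∈ s} => b ↑i)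

theorem mem_Wsp_iff (b : OrthonormalBasis (Fin n) ℝ (EuclideanSpace ℝ (Fin n)))
    (s : Finset (Fin n)) (x : EuclideanSpace ℝ (Fin n)) :
    x ∈ Wsp b s ↔ ∀ j ∉ s, b.repr x j = 0 := by
  classical
  constructor
  · intro hx
    induction hx using Submodule.span_induction with
    | mem y hy =>
      obtain ⟨⟨i, hi⟩, rfl⟩ := hy
      intro j hj
      rw [b.repr_self, EuclideanSpace.single_apply]
      have : j ≠ i := fun h => hj (h ▸ hi)
      simp [this]
    | zero => simp
    | add y z hy hz hy' hz' => intro j hj; rw [map_add]; simp [hy' j hj, hz' j hj]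
    | smul a y hy hy' => intro j hj; rw [_root_.map_smul]; simp [hy' j hj]
  · intro h
    rw [← b.sum_repr x]
    apply Submodule.sum_mem
    intro i _
    by_cases hi : i ∈ s
    · exact Submodule.smul_mem _ _ (Submodule.subset_span ⟨⟨i, hi⟩, rfl⟩)
    · rw [h i hi, zero_smul]; exact Submodule.zero_mem _

theorem finrank_Wsp (b : OrthonormalBasis (Fin n) ℝ (EuclideanSpace ℝ (Fin n)))
    (s : Finset (Fin n)) : Module.finrank ℝ (Wsp b s) = s.card := by
  have li : LinearIndependent ℝ (fun i : {x // x ∈ s} => b ↑i) :=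
    (b.orthonormal.comp _ Subtype.coe_injective).linearIndependent
  rw [Wsp, finrank_span_eq_card li, Fintype.card_coe]


set_option maxHeartbeats 2000000 in
/-- If `S` is a stochastic matrix that is a direct sum of `k ≥ 2` stochastic matrices
(block diagonal with respect to a surjective block assignment `c`), and `T = S + E`
is stochastic with `ε = ‖E‖_∞ / 2`, then `I - T` has at least `k` singular values
(square roots of eigenvalues of `(I-T)(I-T)ᴴ`, counted with multiplicity)
bounded above by `2ε√n`. -/
theorem stmt5 {n k : ℕ} (hk : 2 ≤ k)
    (S T E : Matrix (Fin n) (Fin n) ℝ)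
    (c : Fin n → Fin k) (hc : Function.Surjective c)
    (hblock : ∀ i j, c i ≠ c j → S i j = 0)
    (hSpos : ∀ i j, 0 ≤ S i j) (hSrow : ∀ i, ∑ j, S i j = 1)
    (hTpos : ∀ i j, 0 ≤ T i j) (hTrow : ∀ i, ∑ j, T i j = 1)
    (hTE : T = S + E)
    (ε : ℝ) (hε : ε = infNorm E / 2) :
    ∃ s : Finset (Fin n), s.card = k ∧ ∀ i ∈ s,
      Real.sqrt ((Matrix.isHermitian_mul_conjTranspose_self (1 - T)).eigenvalues i)
        ≤ 2 * ε * Real.sqrt n := by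
  classical
  have hn : k ≤ n := by simpa using Fintype.card_le_of_surjective c hc
  have hnpos : 0 < n := by omega
  haveI : Nonempty (Fin n) := ⟨⟨0, hnpos⟩⟩
  have hEbound : ∀ i, ∑ j, |E i j| ≤ 2 * ε := by
    intro i
    have h1 : (∑ j, |E i j|) ≤ infNorm E :=
      le_ciSup (f := fun i => ∑ j, |E i j|) (Set.Finite.bddAbove (Set.finite_range _)) i
    rw [hε]; linarith
  have hε0 : 0 ≤ ε := by
    have h0 : (0:ℝ) ≤ ∑ j, |E ⟨0, hnpos⟩ j| := Finset.sum_nonneg fun j _ => abs_nonneg _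
    have := hEbound ⟨0, hnpos⟩
    linarith
  set M : Matrix (Fin n) (Fin n) ℝ := 1 - T with hMdef
  set t : ℝ := 4 * ε ^ 2 * n with htdef
  have ht0 : 0 ≤ t := by positivity
  set hA := Matrix.isHermitian_mul_conjTranspose_self M with hAdef
  have hB := Matrix.isHermitian_conjTranspose_mul_self M
  set uA := hA.eigenvectorBasis with huA
  set uB := hB.eigenvectorBasis with huB
  set μA := hA.eigenvalues with hμA
  set μB := hB.eigenvalues with hμB
  -- the key quantitative bound on block-constant vectors
  have key : ∀ a : Fin k → ℝ,
      ((M *ᵥ fun j => a (c j)) ⬝ᵥ (M *ᵥ fun j => a (c j)))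
        ≤ t * ((fun j => a (c j)) ⬝ᵥ fun j => a (c j)) := by
    intro a
    set v : Fin n → ℝ := fun j => a (c j) with hv
    set Sa : ℝ := ∑ b, a b ^ 2 with hSa
    have hSa0 : 0 ≤ Sa := Finset.sum_nonneg fun _ _ => sq_nonneg _
    have hSv : ∀ i, ∑ j, S i j * v j = v i := by
      intro i
      have hcong : ∀ j ∈ Finset.univ, S i j * v j = S i j * v i := by
        intro j _
        by_cases hcj : c i = c j
        · show S i j * a (c j) = S i j * a (c i)
          rw [hcj]
        · rw [hblock i j hcj]; ring
      rw [Finset.sum_congr rfl hcong, ← Finset.sum_mul, hSrow i, one_mul]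
    have hMv : ∀ i, (M *ᵥ v) i = -(∑ j, E i j * v j) := by
      intro i
      have h1 : (M *ᵥ v) i = v i - ∑ j, T i j * v j := by
        rw [hMdef, Matrix.sub_mulVec, Matrix.one_mulVec]
        simp [Matrix.mulVec, dotProduct]
      rw [h1, ← hSv i, ← Finset.sum_sub_distrib, ← Finset.sum_neg_distrib]
      apply Finset.sum_congr rfl
      intro j _
      have : E i j = T i j - S i j := by rw [hTE]; simp [Matrix.add_apply]
      rw [this]; ring
    have habs : ∀ i, |(M *ᵥ v) i| ≤ 2 * ε * Real.sqrt Sa := by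
      intro i
      rw [hMv i, abs_neg]
      calc |∑ j, E i j * v j| ≤ ∑ j, |E i j * v j| := Finset.abs_sum_le_sum_abs _ _
        _ ≤ ∑ j, |E i j| * Real.sqrt Sa := by
            apply Finset.sum_le_sum
            intro j _
            rw [abs_mul]
            apply mul_le_mul_of_nonneg_left _ (abs_nonneg _)
            have h1 : v j ^ 2 ≤ Sa :=
              Finset.single_le_sum (f := fun b => a b ^ 2) (fun _ _ => sq_nonneg _)
                (Finset.mem_univ (c j))
            calc |v j| = Real.sqrt (v j ^ 2) := (Real.sqrt_sq_eq_abs _).symm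
              _ ≤ Real.sqrt Sa := Real.sqrt_le_sqrt h1
        _ = (∑ j, |E i j|) * Real.sqrt Sa := by rw [Finset.sum_mul]
        _ ≤ 2 * ε * Real.sqrt Sa :=
            mul_le_mul_of_nonneg_right (hEbound i) (Real.sqrt_nonneg _)
    have hSvv : Sa ≤ v ⬝ᵥ v := by
      obtain ⟨g, hg⟩ := hc.hasRightInverse
      have hginj : Function.Injective g := fun b1 b2 h => by rw [← hg b1, ← hg b2, h]
      calc Sa = ∑ b, v (g b) ^ 2 := by
            apply Finset.sum_congr rfl
            intro b _
            show a b ^ 2 = a (c (g b)) ^ 2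
            rw [hg b]
        _ = ∑ j ∈ Finset.univ.image g, v j ^ 2 :=
            (Finset.sum_image (f := fun j => v j ^ 2) fun b1 _ b2 _ h => hginj h).symm
        _ ≤ ∑ j, v j ^ 2 :=
            Finset.sum_le_sum_of_subset_of_nonneg (Finset.subset_univ _)
              (fun _ _ _ => sq_nonneg _)
        _ = v ⬝ᵥ v := by simp [dotProduct, sq]
    calc (M *ᵥ v) ⬝ᵥ (M *ᵥ v) = ∑ i, (M *ᵥ v) i * (M *ᵥ v) i := rfl
      _ ≤ ∑ _i : Fin n, (2 * ε) ^ 2 * Sa := by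
          apply Finset.sum_le_sum
          intro i _
          have h2 : (M *ᵥ v) i * (M *ᵥ v) i = |(M *ᵥ v) i| ^ 2 := by rw [sq_abs]; ring
          rw [h2]
          calc |(M *ᵥ v) i| ^ 2 ≤ (2 * ε * Real.sqrt Sa) ^ 2 := by
                apply pow_le_pow_left₀ (abs_nonneg _) (habs i)
            _ = (2 * ε) ^ 2 * Sa := by rw [mul_pow, Real.sq_sqrt hSa0]
      _ = (n : ℝ) * ((2 * ε) ^ 2 * Sa) := by
          rw [Finset.sum_const, Finset.card_univ, Fintype.card_fin, nsmul_eq_mul]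
      _ ≤ t * (v ⬝ᵥ v) := by
          have h3 : (n : ℝ) * ((2 * ε) ^ 2 * Sa) = t * Sa := by rw [htdef]; ring
          rw [h3]
          exact mul_le_mul_of_nonneg_left hSvv ht0
  -- the subspace of block-constant vectors
  set L : (Fin k → ℝ) →ₗ[ℝ] EuclideanSpace ℝ (Fin n) :=
    { toFun := fun a => toE fun j => a (c j)
      map_add' := fun _ _ => rfl
      map_smul' := fun _ _ => rfl } with hL
  have hLinj : Function.Injective L := by
    intro a a' h
    funext b
    obtain ⟨j, rfl⟩ := hc b
    exact congrFun (congrArg WithLp.ofLp h) j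
  have hVrank : Module.finrank ℝ (LinearMap.range L) = k := by
    rw [LinearMap.finrank_range_of_inj hLinj]
    simp
  set sA : Finset (Fin n) := Finset.univ.filter (fun i => t < μA i) with hsA
  set sB : Finset (Fin n) := Finset.univ.filter (fun i => t < μB i) with hsB
  set sSmall : Finset (Fin n) := Finset.univ.filter (fun i => μA i ≤ t) with hsSmall
  have hpart : sA.card + sSmall.card = n := by
    have h1 := Finset.card_filter_add_card_filter_not
      (s := (Finset.univ : Finset (Fin n))) (p := fun i => t < μA i)
    simp only [not_lt] at h1
    simpa [hsA, hsSmall] using h1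
  -- claim 2 : k + sB.card ≤ n
  have claim2 : k + sB.card ≤ n := by
    by_contra hcon
    push_neg at hcon
    have hsum := Submodule.finrank_sup_add_finrank_inf_eq (LinearMap.range L) (Wsp uB sB)
    have hle : Module.finrank ℝ ↥(LinearMap.range L ⊔ Wsp uB sB) ≤ n := by
      have h1 := Submodule.finrank_le (LinearMap.range L ⊔ Wsp uB sB)
      rwa [finrank_euclideanSpace, Fintype.card_fin] at h1
    rw [hVrank, finrank_Wsp] at hsum
    have hpos : 0 < Module.finrank ℝ ↥(LinearMap.range L ⊓ Wsp uB sB) := by omega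
    have hne : LinearMap.range L ⊓ Wsp uB sB ≠ ⊥ := by
      intro h
      rw [h, finrank_bot] at hpos
      exact lt_irrefl 0 hpos
    obtain ⟨v, hv, hv0⟩ := Submodule.exists_mem_ne_zero_of_ne_bot hne
    obtain ⟨a, ha⟩ := hv.1
    have hvW := (mem_Wsp_iff uB sB v).1 hv.2
    have hup : ⟪v, toE ((Mᴴ * M) *ᵥ v)⟫ ≤ t * ⟪v, v⟫ := by
      rw [inner_eq_dot, inner_eq_dot]
      simp only [toE_eq]
      have h1 : (v : Fin n → ℝ) ⬝ᵥ ((Mᴴ * M) *ᵥ (v : Fin n → ℝ))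
          = (M *ᵥ (v : Fin n → ℝ)) ⬝ᵥ (M *ᵥ (v : Fin n → ℝ)) := by
        rw [← Matrix.mulVec_mulVec, ← mv_dot]
      rw [h1]
      have hva : (v : Fin n → ℝ) = fun j => a (c j) := by rw [← ha]; rfl
      rw [hva]
      exact key a
    have hdown : t * ⟪v, v⟫ < ⟪v, toE ((Mᴴ * M) *ᵥ v)⟫ := by
      rw [quad_expand _ hB v, norm_expand uB v]
      have hex : ∃ i, uB.repr v i ≠ 0 := by
        by_contra hall
        push_neg at hall
        exact hv0 (eq_zero_of_repr_eq_zero uB v hall)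
      obtain ⟨i0, hi0⟩ := hex
      have hi0B : i0 ∈ sB := by
        by_contra h
        exact hi0 (hvW i0 h)
      rw [Finset.mul_sum]
      apply Finset.sum_lt_sum
      · intro i _
        by_cases hi : i ∈ sB
        · have h2 : t < μB i := (Finset.mem_filter.1 hi).2
          nlinarith [sq_nonneg (uB.repr v i)]
        · rw [hvW i hi]
          simp
      · refine ⟨i0, Finset.mem_univ _, ?_⟩
        have h1 : t < μB i0 := (Finset.mem_filter.1 hi0B).2
        have h2 : 0 < uB.repr v i0 ^ 2 := by positivity
        nlinarith
    exact absurd hup (not_le.2 hdown)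
  -- claim 1 : sA.card ≤ sB.card
  set f : EuclideanSpace ℝ (Fin n) →ₗ[ℝ] EuclideanSpace ℝ (Fin n) :=
    { toFun := fun x => toE (Mᴴ *ᵥ x)
      map_add' := fun x y => congrArg toE (Matrix.mulVec_add Mᴴ x y)
      map_smul' := fun r x => congrArg toE (Matrix.mulVec_smul Mᴴ r x) } with hf
  have hmaps : ∀ x ∈ Wsp uA sA, f x ∈ Wsp uB sB := by
    have hle : Wsp uA sA ≤ (Wsp uB sB).comap f := by
      apply Submodule.span_le.2
      rintro _ ⟨⟨i, hi⟩, rfl⟩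
      simp only [SetLike.mem_coe, Submodule.mem_comap]
      rw [mem_Wsp_iff]
      intro j hj
      have hiA : t < μA i := (Finset.mem_filter.1 hi).2
      have hjB : ¬ t < μB j := fun h => hj (Finset.mem_filter.2 ⟨Finset.mem_univ _, h⟩)
      have hjB' : μB j ≤ t := not_lt.1 hjB
      have hBw : (Mᴴ * M) *ᵥ (Mᴴ *ᵥ (uA i : Fin n → ℝ))
          = μA i • (Mᴴ *ᵥ (uA i : Fin n → ℝ)) := by
        have hAu : M *ᵥ (Mᴴ *ᵥ (uA i : Fin n → ℝ))
            = μA i • (uA i : Fin n → ℝ) := by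
          rw [Matrix.mulVec_mulVec]
          exact hA.mulVec_eigenvectorBasis i
        rw [← Matrix.mulVec_mulVec, hAu, Matrix.mulVec_smul]
      have e1 : ⟪uB j, toE ((Mᴴ * M) *ᵥ (Mᴴ *ᵥ (uA i : Fin n → ℝ)))⟫
          = μA i * ⟪uB j, f (uA i)⟫ := by
        rw [hBw]
        exact real_inner_smul_right (uB j) (f (uA i)) (μA i)
      have e2 : ⟪uB j, toE ((Mᴴ * M) *ᵥ (Mᴴ *ᵥ (uA i : Fin n → ℝ)))⟫
          = μB j * ⟪uB j, f (uA i)⟫ := by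
        rw [inner_eq_dot, inner_eq_dot]
        simp only [toE_eq]
        have h3 : ((Mᴴ * M) *ᵥ (uB j : Fin n → ℝ)) ⬝ᵥ (Mᴴ *ᵥ (uA i : Fin n → ℝ))
            = (uB j : Fin n → ℝ) ⬝ᵥ ((Mᴴ * M) *ᵥ (Mᴴ *ᵥ (uA i : Fin n → ℝ))) := by
          rw [mv_dot, hB]
        rw [← h3]
        have h4 : (Mᴴ * M) *ᵥ (uB j : Fin n → ℝ) = μB j • (uB j : Fin n → ℝ) :=
          hB.mulVec_eigenvectorBasis j
        rw [h4, smul_dotProduct, smul_eq_mul]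
        rfl
      have h5 : (μA i - μB j) * ⟪uB j, f (uA i)⟫ = 0 := by
        rw [sub_mul]
        rw [← e1, ← e2]
        ring
      have h6 : ⟪uB j, f (uA i)⟫ = 0 := by
        rcases mul_eq_zero.1 h5 with h | h
        · exfalso; have : μA i = μB j := by linarith [sub_eq_zero.1 h]
          linarith
        · exact h
      rw [uB.repr_apply_apply]
      exact h6
    intro x hx
    exact hle hx
  have hinj0 : ∀ x ∈ Wsp uA sA, f x = 0 → x = 0 := by
    intro x hx hfx
    have hq : ⟪x, toE ((M * Mᴴ) *ᵥ (x : Fin n → ℝ))⟫ = 0 := by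
      have h1 : ⟪x, toE ((M * Mᴴ) *ᵥ (x : Fin n → ℝ))⟫
          = (Mᴴ *ᵥ (x : Fin n → ℝ)) ⬝ᵥ (Mᴴ *ᵥ (x : Fin n → ℝ)) := by
        rw [inner_eq_dot]
        simp only [toE_eq]
        rw [mv_dot Mᴴ, Matrix.conjTranspose_conjTranspose, Matrix.mulVec_mulVec]
      have h2 : Mᴴ *ᵥ (x : Fin n → ℝ) = 0 := congrArg WithLp.ofLp hfx
      rw [h1, h2]
      simp [dotProduct]
    rw [quad_expand _ hA x] at hq
    have hxW := (mem_Wsp_iff uA sA x).1 hx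
    have hnonneg : ∀ i ∈ Finset.univ, 0 ≤ μA i * (uA.repr x i) ^ 2 := by
      intro i _
      by_cases hi : i ∈ sA
      · have h2 : t < μA i := (Finset.mem_filter.1 hi).2
        nlinarith [sq_nonneg (uA.repr x i)]
      · rw [hxW i hi]
        simp
    have hall := (Finset.sum_eq_zero_iff_of_nonneg hnonneg).1 hq
    apply eq_zero_of_repr_eq_zero uA x
    intro i
    by_cases hi : i ∈ sA
    · have h1 := hall i (Finset.mem_univ _)
      have h2 : t < μA i := (Finset.mem_filter.1 hi).2
      have h3 : 0 < μA i := lt_of_le_of_lt ht0 h2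
      have h4 : (uA.repr x i) ^ 2 = 0 := by
        by_contra h5
        have h6 : 0 < (uA.repr x i) ^ 2 :=
          lt_of_le_of_ne (sq_nonneg _) (Ne.symm h5)
        nlinarith
      exact (pow_eq_zero_iff two_ne_zero).1 h4
    · exact hxW i hi
  have claim1 : sA.card ≤ sB.card := by
    set g := f.restrict hmaps with hg
    have hginj : Function.Injective g := by
      intro x y hxy
      have h1 : f ↑x = f ↑y := Subtype.ext_iff.1 hxy
      have h0 : f (↑x - ↑y) = 0 := by rw [map_sub, h1, sub_self]
      have h2 := hinj0 (↑x - ↑y) (Submodule.sub_mem _ x.2 y.2) h0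
      exact Subtype.ext (sub_eq_zero.1 h2)
    have h1 := LinearMap.finrank_le_finrank_of_injective hginj
    rwa [finrank_Wsp, finrank_Wsp] at h1
  have hkcard : k ≤ sSmall.card := by omega
  obtain ⟨s, hsub, hcard⟩ := Finset.exists_subset_card_eq hkcard
  refine ⟨s, hcard, ?_⟩
  intro i hi
  have hμ : μA i ≤ t := (Finset.mem_filter.1 (hsub hi)).2
  have h1 : Real.sqrt (μA i) ≤ Real.sqrt t := Real.sqrt_le_sqrt hμ
  have h2 : Real.sqrt t = 2 * ε * Real.sqrt n := by
    rw [htdef, show (4:ℝ) * ε ^ 2 * n = (2 * ε) ^ 2 * n by ring,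
      Real.sqrt_mul (sq_nonneg _), Real.sqrt_sq (by linarith)]
  rw [← h2]
  exact h1
end

section
/- Let T be an n×n stochastic matrix and let σ denote the second smallest singular value of I − T. Then for any n×n stochastic matrix S that is a direct sum of at least two stochastic matrices (a completely decoupled transition matrix), ‖T − S‖_F ≥ σ. -/
open Matrix BigOperators

/-- The second smallest singular value of a real square matrix: the singular values are
the square roots of the eigenvalues of `A * Aᴴ`; we sort them increasingly and take the
second entry. -/
noncomputable def secondSmallestSV {n : ℕ} (A : Matrix (Fin n) (Fin n) ℝ) : ℝ :=
  ((List.ofFn fun i =>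
      Real.sqrt ((Matrix.isHermitian_mul_conjTranspose_self A).eigenvalues i)).mergeSort
    (fun a b => decide (a ≤ b))).getD 1 0

namespace Stmt6Aux

variable {n : ℕ}

lemma mergeSort_ofFn_eq (f : Fin n → ℝ) (g : ℝ → ℝ) (hg : Monotone g) :
    ((List.ofFn fun i => g (f i)).mergeSort (fun a b => decide (a ≤ b)))
      = List.ofFn fun i => g (f (Tuple.sort f i)) := by
  refine (fun hp h1 h2 => List.Perm.eq_of_pairwise' (r := fun a b : ℝ => a ≤ b) h1 h2 hp) ?_ ?_ ?_
  · refine (List.mergeSort_perm _ _).trans ?_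
    exact (Equiv.Perm.ofFn_comp_perm (Tuple.sort f) (fun i => g (f i))).symm
  · exact List.pairwise_mergeSort' _ _
  · exact List.pairwise_ofFn.mpr fun i j hij => (hg.comp (Tuple.monotone_sort f)) hij.le

lemma secondSmallestSV_eq (A : Matrix (Fin n) (Fin n) ℝ) (hn : 1 < n) :
    secondSmallestSV A =
      Real.sqrt ((Matrix.isHermitian_mul_conjTranspose_self A).eigenvalues
        (Tuple.sort (Matrix.isHermitian_mul_conjTranspose_self A).eigenvalues ⟨1, hn⟩)) := by
  unfold secondSmallestSV
  rw [mergeSort_ofFn_eq _ Real.sqrt (fun a b h => Real.sqrt_le_sqrt h)]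
  rw [List.getD_eq_getElem _ _ (by simpa using hn)]
  simp

/-- Existence of a nonzero left fixed vector of `S` supported on the block `k`. -/
lemma exists_left_fixed (S : Matrix (Fin n) (Fin n) ℝ)
    (hSrow : ∀ i, ∑ j, S i j = 1)
    (c : Fin n → Fin 2) (hblock : ∀ i j, c i ≠ c j → S i j = 0)
    (k : Fin 2) (hk : ∃ i, c i = k) :
    ∃ x : Fin n → ℝ, x ≠ 0 ∧ (∀ i, c i ≠ k → x i = 0) ∧ ∀ i, ∑ j, S j i * x j = x i := by
  classical
  set Sk : Matrix {i // c i = k} {i // c i = k} ℝ := fun i j => S i.1 j.1 with hSk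
  haveI : Nonempty {i // c i = k} := ⟨⟨hk.choose, hk.choose_spec⟩⟩
  have hsub : ∀ (f : Fin n → ℝ), (∀ j, c j ≠ k → f j = 0) →
      ∑ j : {i // c i = k}, f j.1 = ∑ j, f j := by
    intro f hf
    rw [← Finset.sum_filter_of_ne (p := fun j => c j = k)
      (fun x _ hx => by by_contra h; exact hx (hf x h))]
    exact (Finset.sum_subtype _ (by simp) _).symm
  have hrow : ∀ i : {i // c i = k}, ∑ j : {i // c i = k}, Sk i j = 1 := by
    intro i
    rw [hsub (fun j => S i.1 j)
      (fun j hj => hblock i.1 j (by rw [i.2]; exact fun h => hj h.symm))]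
    exact hSrow i.1
  have hones : (1 - Sk) *ᵥ (fun _ => (1 : ℝ)) = 0 := by
    funext i
    simp [mulVec, dotProduct, Matrix.sub_apply, one_apply, Finset.sum_ite_eq', hrow i,
      Finset.sum_sub_distrib]
  have hdet : (1 - Sk).det = 0 := by
    rw [← Matrix.exists_mulVec_eq_zero_iff]
    refine ⟨fun _ => 1, ?_, hones⟩
    intro h
    exact one_ne_zero (congrFun h (Classical.arbitrary _))
  have hdetT : ((1 - Sk)ᵀ).det = 0 := by rw [Matrix.det_transpose]; exact hdet
  obtain ⟨y, hy0, hy⟩ := (Matrix.exists_mulVec_eq_zero_iff).mpr hdetT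
  have hyfix : ∀ i : {i // c i = k}, ∑ j : {i // c i = k}, Sk j i * y j = y i := by
    intro i
    have := congrFun hy i
    simp only [mulVec, dotProduct, transpose_apply, Matrix.sub_apply, one_apply, sub_mul,
      Finset.sum_sub_distrib, ite_mul, one_mul, zero_mul, Finset.sum_ite_eq,
      Finset.sum_ite_eq', Finset.mem_univ, if_true, Pi.zero_apply] at this
    linarith
  refine ⟨fun i => if h : c i = k then y ⟨i, h⟩ else 0, ?_, ?_, ?_⟩
  · intro h
    apply hy0
    funext j
    have := congrFun h j.1
    simpa [j.2] using this
  · intro i hi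
    simp [hi]
  · intro i
    have hsupp : ∀ j, c j ≠ k → S j i * (if h : c j = k then y ⟨j, h⟩ else 0) = 0 := by
      intro j hj; simp [hj]
    rw [← hsub (fun j => S j i * (if h : c j = k then y ⟨j, h⟩ else 0)) hsupp]
    by_cases hik : c i = k
    · simp only [hik, dif_pos]
      have hfix := hyfix ⟨i, hik⟩
      calc ∑ j : {i // c i = k}, S j.1 i * (if h : c j.1 = k then y ⟨j.1, h⟩ else 0)
          = ∑ j : {i // c i = k}, Sk j ⟨i, hik⟩ * y j := by
            refine Finset.sum_congr rfl fun j _ => ?_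
            simp [hSk, j.2]
        _ = y ⟨i, hik⟩ := hfix
    · simp only [hik, dif_neg, not_false_iff]
      refine Finset.sum_eq_zero fun j _ => ?_
      rw [hblock j.1 i (by rw [j.2]; exact fun h => hik h.symm), zero_mul]

/-- Key spectral estimate: given a bound index `i₀` outside of which all eigenvalues of the
Hermitian matrix `M` are at least `lam`, any two vectors admit a nontrivial linear
combination `v` with `lam * (v ⬝ᵥ v) ≤ v ⬝ᵥ (M *ᵥ v)`. -/
lemma exists_combo (M : Matrix (Fin n) (Fin n) ℝ) (hM : M.IsHermitian)
    (lam : ℝ) (i₀ : Fin n) (hge : ∀ i, i ≠ i₀ → lam ≤ hM.eigenvalues i)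
    (x₀ x₁ : Fin n → ℝ) :
    ∃ a b : ℝ, ¬(a = 0 ∧ b = 0) ∧
      lam * ((a • x₀ + b • x₁) ⬝ᵥ (a • x₀ + b • x₁))
        ≤ (a • x₀ + b • x₁) ⬝ᵥ (M *ᵥ (a • x₀ + b • x₁)) := by
  classical
  set μ := hM.eigenvalues with hμ
  set U : Matrix (Fin n) (Fin n) ℝ := (hM.eigenvectorUnitary : Matrix (Fin n) (Fin n) ℝ)
    with hUdef
  have hUmem := (hM.eigenvectorUnitary).2
  have hU1 : U * star U = 1 := (Matrix.mem_unitaryGroup_iff).mp hUmem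
  have hU2 : star U * U = 1 := (Matrix.mem_unitaryGroup_iff').mp hUmem
  have hspec : M = U * Matrix.diagonal μ * star U := by
    have := hM.spectral_theorem
    simpa using this
  have hstar : star U = Uᵀ := by
    rw [Matrix.star_eq_conjTranspose, Matrix.conjTranspose_eq_transpose_of_trivial]
  have hvm : ∀ z : Fin n → ℝ, z ᵥ* U = star U *ᵥ z := by
    intro z
    rw [hstar, ← Matrix.vecMul_transpose, Matrix.transpose_transpose]
  -- quadratic form identities
  have hquad : ∀ z : Fin n → ℝ,
      z ⬝ᵥ (M *ᵥ z) = ∑ i, μ i * ((star U *ᵥ z) i)^2 := by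
    intro z
    rw [hspec]
    rw [← Matrix.mulVec_mulVec, ← Matrix.mulVec_mulVec, Matrix.dotProduct_mulVec, hvm]
    simp only [dotProduct, Matrix.mulVec_diagonal]
    exact Finset.sum_congr rfl fun i _ => by ring
  have hnorm : ∀ z : Fin n → ℝ, z ⬝ᵥ z = ∑ i, ((star U *ᵥ z) i)^2 := by
    intro z
    have h1 : U *ᵥ (star U *ᵥ z) = z := by
      rw [Matrix.mulVec_mulVec, hU1, Matrix.one_mulVec]
    calc z ⬝ᵥ z = z ⬝ᵥ (U *ᵥ (star U *ᵥ z)) := by rw [h1]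
      _ = (z ᵥ* U) ⬝ᵥ (star U *ᵥ z) := Matrix.dotProduct_mulVec _ _ _
      _ = (star U *ᵥ z) ⬝ᵥ (star U *ᵥ z) := by rw [hvm]
      _ = ∑ i, ((star U *ᵥ z) i)^2 := by
          simp [dotProduct, pow_two]
  set p := (star U *ᵥ x₀) i₀ with hp
  set q := (star U *ᵥ x₁) i₀ with hq
  have hlin : ∀ a b : ℝ, (star U *ᵥ (a • x₀ + b • x₁)) i₀ = a * p + b * q := by
    intro a b
    rw [Matrix.mulVec_add, Matrix.mulVec_smul, Matrix.mulVec_smul]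
    simp [hp, hq]
  have core : ∀ a b : ℝ, a * p + b * q = 0 →
      lam * ((a • x₀ + b • x₁) ⬝ᵥ (a • x₀ + b • x₁))
        ≤ (a • x₀ + b • x₁) ⬝ᵥ (M *ᵥ (a • x₀ + b • x₁)) := by
    intro a b h0
    rw [hquad, hnorm, Finset.mul_sum]
    refine Finset.sum_le_sum fun i _ => ?_
    by_cases hi : i = i₀
    · subst hi
      rw [hlin, h0]
      simp
    · exact mul_le_mul_of_nonneg_right (hge i hi) (sq_nonneg _)
  by_cases hpq : p = 0 ∧ q = 0
  · exact ⟨1, 0, by simp, core 1 0 (by rw [hpq.1, hpq.2]; ring)⟩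
  · refine ⟨-q, p, ?_, core _ _ (by ring)⟩
    rintro ⟨h1, h2⟩
    exact hpq ⟨h2, neg_eq_zero.mp h1⟩

end Stmt6Aux

/-- If `T` is an `n × n` stochastic matrix and `σ` the second smallest singular value of
`I - T`, then for any completely decoupled stochastic matrix `S` (block diagonal with
respect to a surjective assignment onto at least two blocks), `‖T - S‖_F ≥ σ`. -/
theorem stmt6 {n : ℕ} (T : Matrix (Fin n) (Fin n) ℝ)
    (hTpos : ∀ i j, 0 ≤ T i j) (hTrow : ∀ i, ∑ j, T i j = 1)
    (S : Matrix (Fin n) (Fin n) ℝ)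
    (hSpos : ∀ i j, 0 ≤ S i j) (hSrow : ∀ i, ∑ j, S i j = 1)
    (c : Fin n → Fin 2) (hc : Function.Surjective c)
    (hblock : ∀ i j, c i ≠ c j → S i j = 0) :
    secondSmallestSV (1 - T) ≤ Real.sqrt (∑ i, ∑ j, (T i j - S i j) ^ 2) := by
  classical
  obtain ⟨i0, hi0⟩ := hc 0
  obtain ⟨i1, hi1⟩ := hc 1
  have hne : i0 ≠ i1 := by
    intro h; rw [h, hi1] at hi0; exact absurd hi0 (by decide)
  have hn : 1 < n := by
    have h0 := i0.isLt; have h1 := i1.isLt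
    have hne' : i0.val ≠ i1.val := fun h => hne (Fin.ext h)
    omega
  set A : Matrix (Fin n) (Fin n) ℝ := 1 - T with hAdef
  set hM := Matrix.isHermitian_mul_conjTranspose_self A with hMdef
  set μ := hM.eigenvalues with hμ
  set σ := Tuple.sort μ with hσ
  set lam := μ (σ ⟨1, hn⟩) with hlam
  have hge : ∀ i, i ≠ σ ⟨0, by omega⟩ → lam ≤ μ i := by
    intro i hi
    have hrepr : i = σ (σ.symm i) := (Equiv.apply_symm_apply σ i).symm
    rw [hrepr]
    refine Tuple.monotone_sort μ ?_
    have hne0 : σ.symm i ≠ ⟨0, by omega⟩ := fun h => hi (by rw [hrepr, h])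
    have hv : (σ.symm i).val ≠ 0 := fun h => hne0 (Fin.ext h)
    rw [Fin.le_def]
    exact Nat.one_le_iff_ne_zero.mpr hv
  obtain ⟨x₀, hx₀ne, hx₀supp, hx₀fix⟩ :=
    Stmt6Aux.exists_left_fixed S hSrow c hblock 0 ⟨i0, hi0⟩
  obtain ⟨x₁, hx₁ne, hx₁supp, hx₁fix⟩ :=
    Stmt6Aux.exists_left_fixed S hSrow c hblock 1 ⟨i1, hi1⟩
  obtain ⟨a, b, hab, hkey⟩ :=
    Stmt6Aux.exists_combo (A * Aᴴ) hM lam (σ ⟨0, by omega⟩) hge x₀ x₁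
  set v := a • x₀ + b • x₁ with hv
  have hvne : v ≠ 0 := by
    intro h
    rcases not_and_or.mp hab with ha | hb
    · obtain ⟨j, hj⟩ := Function.ne_iff.mp hx₀ne
      have hcj : c j = 0 := by by_contra hcj; exact hj (hx₀supp j hcj)
      have hx1j : x₁ j = 0 := hx₁supp j (by rw [hcj]; decide)
      have hvj := congrFun h j
      simp only [hv, Pi.add_apply, Pi.smul_apply, smul_eq_mul, hx1j, mul_zero, add_zero,
        Pi.zero_apply] at hvj
      rcases mul_eq_zero.mp hvj with h' | h'
      exacts [ha h', hj h']
    · obtain ⟨j, hj⟩ := Function.ne_iff.mp hx₁ne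
      have hcj : c j = 1 := by by_contra hcj; exact hj (hx₁supp j hcj)
      have hx0j : x₀ j = 0 := hx₀supp j (by rw [hcj]; decide)
      have hvj := congrFun h j
      simp only [hv, Pi.add_apply, Pi.smul_apply, smul_eq_mul, hx0j, mul_zero, zero_add,
        Pi.zero_apply] at hvj
      rcases mul_eq_zero.mp hvj with h' | h'
      exacts [hb h', hj h']
  have hvv : 0 < v ⬝ᵥ v := by
    have h0 : (0:ℝ) ≤ v ⬝ᵥ v := Finset.sum_nonneg fun i _ => mul_self_nonneg _
    have hne' : v ⬝ᵥ v ≠ 0 := fun h => hvne (dotProduct_self_eq_zero.mp h)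
    exact lt_of_le_of_ne h0 (Ne.symm hne')
  have hvfix : ∀ i, ∑ j, S j i * v j = v i := by
    intro i
    simp only [hv, Pi.add_apply, Pi.smul_apply, smul_eq_mul]
    have hexp : ∑ j, S j i * (a * x₀ j + b * x₁ j)
        = a * (∑ j, S j i * x₀ j) + b * (∑ j, S j i * x₁ j) := by
      rw [Finset.mul_sum, Finset.mul_sum, ← Finset.sum_add_distrib]
      exact Finset.sum_congr rfl fun j _ => by ring
    rw [hexp, hx₀fix i, hx₁fix i]
  have hAv : ∀ i, (Aᵀ *ᵥ v) i = ∑ j, (S j i - T j i) * v j := by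
    intro i
    have h0 : (Aᵀ *ᵥ v) i = ∑ j, ((1 : Matrix (Fin n) (Fin n) ℝ) j i - T j i) * v j := by
      simp [Matrix.mulVec, dotProduct, hAdef, Matrix.transpose_apply, Matrix.sub_apply]
    rw [h0]
    have h1 : ∑ j, ((1 : Matrix (Fin n) (Fin n) ℝ) j i) * v j = v i := by
      simp [Matrix.one_apply, Finset.sum_ite_eq]
    calc ∑ j, ((1 : Matrix (Fin n) (Fin n) ℝ) j i - T j i) * v j
        = (∑ j, ((1 : Matrix (Fin n) (Fin n) ℝ) j i) * v j) - ∑ j, T j i * v j := by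
          rw [← Finset.sum_sub_distrib]
          exact Finset.sum_congr rfl fun j _ => by ring
      _ = v i - ∑ j, T j i * v j := by rw [h1]
      _ = (∑ j, S j i * v j) - ∑ j, T j i * v j := by rw [hvfix i]
      _ = ∑ j, (S j i - T j i) * v j := by
          rw [← Finset.sum_sub_distrib]
          exact Finset.sum_congr rfl fun j _ => by ring
  have hform : v ⬝ᵥ ((A * Aᴴ) *ᵥ v) = (Aᵀ *ᵥ v) ⬝ᵥ (Aᵀ *ᵥ v) := by
    rw [Matrix.conjTranspose_eq_transpose_of_trivial, ← Matrix.mulVec_mulVec,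
      Matrix.dotProduct_mulVec]
    congr 1
    rw [← Matrix.vecMul_transpose, Matrix.transpose_transpose]
  set F := ∑ i, ∑ j, (T i j - S i j) ^ 2 with hF
  have hCS : (Aᵀ *ᵥ v) ⬝ᵥ (Aᵀ *ᵥ v) ≤ F * (v ⬝ᵥ v) := by
    have hvv' : v ⬝ᵥ v = ∑ j, v j ^ 2 := by simp [dotProduct, pow_two]
    have h1 : (Aᵀ *ᵥ v) ⬝ᵥ (Aᵀ *ᵥ v) = ∑ i, (∑ j, (S j i - T j i) * v j)^2 := by
      simp only [dotProduct, hAv]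
      exact Finset.sum_congr rfl fun i _ => (pow_two _).symm
    rw [h1, hvv']
    calc ∑ i, (∑ j, (S j i - T j i) * v j)^2
        ≤ ∑ i, (∑ j, (S j i - T j i)^2) * (∑ j, v j^2) :=
          Finset.sum_le_sum fun i _ => Finset.sum_mul_sq_le_sq_mul_sq Finset.univ _ _
      _ = (∑ i, ∑ j, (S j i - T j i)^2) * (∑ j, v j^2) := by rw [Finset.sum_mul]
      _ = F * (∑ j, v j ^ 2) := by
          congr 1
          rw [hF, Finset.sum_comm]
          exact Finset.sum_congr rfl fun i _ => Finset.sum_congr rfl fun j _ => by ring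
  have hlamF : lam ≤ F := by
    have hkey' : lam * (v ⬝ᵥ v) ≤ (Aᵀ *ᵥ v) ⬝ᵥ (Aᵀ *ᵥ v) := by
      rw [← hform]; exact hkey
    exact le_of_mul_le_mul_right (le_trans hkey' hCS) hvv
  rw [Stmt6Aux.secondSmallestSV_eq A hn]
  exact Real.sqrt_le_sqrt hlamF
end

section
/- For integers 1 ≤ ℓ ≤ m−1, the minimum of max{ x^⊤𝟏/√ℓ, y^⊤𝟏/√(m−ℓ) } over all nonnegative vectors x ∈ ℝ^ℓ, y ∈ ℝ^{m−ℓ} with x^⊤x + y^⊤y = 1 equals 1/√m. -/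
open BigOperators

/-- For `1 ≤ ℓ ≤ m - 1`, the minimum of `max { x᷀𝟏/√ℓ, y᷀𝟏/√(m-ℓ) }` over nonnegative
`x ∈ ℝ^ℓ`, `y ∈ ℝ^{m-ℓ}` with `x᷀x + y᷀y = 1` equals `1/√m`. -/
theorem stmt7 {l m : ℕ} (hl : 1 ≤ l) (hlm : l + 1 ≤ m) :
    IsLeast
      {r : ℝ | ∃ x : Fin l → ℝ, ∃ y : Fin (m - l) → ℝ,
        (∀ i, 0 ≤ x i) ∧ (∀ i, 0 ≤ y i) ∧
        (∑ i, x i ^ 2) + (∑ i, y i ^ 2) = 1 ∧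
        r = max ((∑ i, x i) / Real.sqrt l) ((∑ i, y i) / Real.sqrt (m - l))}
      (1 / Real.sqrt m) := by
  have hlm' : l ≤ m := by omega
  have hcast : ((m - l : ℕ) : ℝ) = (m : ℝ) - l := by
    push_cast [Nat.cast_sub hlm']; ring
  have hm0 : (0:ℝ) < m := by exact_mod_cast Nat.lt_of_lt_of_le Nat.zero_lt_one (by omega : 1 ≤ m)
  have hl0 : (0:ℝ) < l := by exact_mod_cast Nat.lt_of_lt_of_le Nat.zero_lt_one hl
  have hml0 : (0:ℝ) < (m:ℝ) - l := by
    have : (l:ℝ) + 1 ≤ m := by exact_mod_cast hlm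
    linarith
  have sqm : (0:ℝ) < Real.sqrt m := Real.sqrt_pos.2 hm0
  have sql : (0:ℝ) < Real.sqrt l := Real.sqrt_pos.2 hl0
  have sqml : (0:ℝ) < Real.sqrt ((m:ℝ) - l) := Real.sqrt_pos.2 hml0
  constructor
  · -- membership
    refine ⟨fun i => if i = ⟨0, by omega⟩ then Real.sqrt ((l:ℝ)/m) else 0,
      fun i => if i = ⟨0, by omega⟩ then Real.sqrt (((m:ℝ)-l)/m) else 0, ?_, ?_, ?_, ?_⟩
    · intro i; dsimp only; split <;> positivity
    · intro i; dsimp only; split <;> positivity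
    · have h1 : ∑ i : Fin l, (if i = (⟨0, by omega⟩ : Fin l) then Real.sqrt ((l:ℝ)/m) else 0) ^ 2
          = (l:ℝ)/m := by
        rw [Finset.sum_eq_single (⟨0, by omega⟩ : Fin l)]
        · rw [if_pos rfl, Real.sq_sqrt (by positivity)]
        · intro b _ hb; rw [if_neg hb]; ring
        · simp
      have h2 : ∑ i : Fin (m-l), (if i = (⟨0, by omega⟩ : Fin (m-l)) then Real.sqrt (((m:ℝ)-l)/m) else 0) ^ 2
          = ((m:ℝ)-l)/m := by
        rw [Finset.sum_eq_single (⟨0, by omega⟩ : Fin (m-l))]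
        · rw [if_pos rfl, Real.sq_sqrt (by positivity)]
        · intro b _ hb; rw [if_neg hb]; ring
        · simp
      rw [h1, h2]; field_simp; ring
    · have h1 : ∑ i : Fin l, (if i = (⟨0, by omega⟩ : Fin l) then Real.sqrt ((l:ℝ)/m) else 0)
          = Real.sqrt ((l:ℝ)/m) := by
        rw [Finset.sum_eq_single (⟨0, by omega⟩ : Fin l)]
        · rw [if_pos rfl]
        · intro b _ hb; rw [if_neg hb]
        · simp
      have h2 : ∑ i : Fin (m-l), (if i = (⟨0, by omega⟩ : Fin (m-l)) then Real.sqrt (((m:ℝ)-l)/m) else 0)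
          = Real.sqrt (((m:ℝ)-l)/m) := by
        rw [Finset.sum_eq_single (⟨0, by omega⟩ : Fin (m-l))]
        · rw [if_pos rfl]
        · intro b _ hb; rw [if_neg hb]
        · simp
      have e1 : Real.sqrt ((l:ℝ)/m) / Real.sqrt l = 1 / Real.sqrt m := by
        rw [Real.sqrt_div (le_of_lt hl0)]
        field_simp
      have e2 : Real.sqrt (((m:ℝ)-l)/m) / Real.sqrt ((m:ℝ)-l) = 1 / Real.sqrt m := by
        rw [Real.sqrt_div (le_of_lt hml0)]
        field_simp
      rw [h1, h2, e1, e2, max_self]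
  · -- lower bound
    rintro r ⟨x, y, hx, hy, hnorm, hr⟩
    set t := ∑ i, x i ^ 2 with htdef
    set s := ∑ i, y i ^ 2 with hsdef
    have ht0 : 0 ≤ t := Finset.sum_nonneg fun i _ => sq_nonneg _
    have hs0 : 0 ≤ s := Finset.sum_nonneg fun i _ => sq_nonneg _
    have hxs : Real.sqrt t ≤ ∑ i, x i := by
      have h : t ≤ (∑ i, x i)^2 :=
        Finset.sum_sq_le_sq_sum_of_nonneg (f := x) (fun i _ => hx i)
      calc Real.sqrt t ≤ Real.sqrt ((∑ i, x i)^2) := Real.sqrt_le_sqrt h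
        _ = ∑ i, x i := Real.sqrt_sq (Finset.sum_nonneg fun i _ => hx i)
    have hys : Real.sqrt s ≤ ∑ i, y i := by
      have h : s ≤ (∑ i, y i)^2 :=
        Finset.sum_sq_le_sq_sum_of_nonneg (f := y) (fun i _ => hy i)
      calc Real.sqrt s ≤ Real.sqrt ((∑ i, y i)^2) := Real.sqrt_le_sqrt h
        _ = ∑ i, y i := Real.sqrt_sq (Finset.sum_nonneg fun i _ => hy i)
    by_contra hcon
    push_neg at hcon
    rw [hr, max_lt_iff] at hcon
    obtain ⟨h1, h2⟩ := hcon
    rw [div_lt_div_iff₀ sql sqm] at h1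
    rw [div_lt_div_iff₀ sqml sqm] at h2
    -- √t * √m < √l  and  √s * √m < √(m-l)
    have k1 : Real.sqrt t * Real.sqrt m < Real.sqrt l := by
      calc Real.sqrt t * Real.sqrt m ≤ (∑ i, x i) * Real.sqrt m := by
            exact mul_le_mul_of_nonneg_right hxs (le_of_lt sqm)
        _ < 1 * Real.sqrt l := h1
        _ = Real.sqrt l := one_mul _
    have k2 : Real.sqrt s * Real.sqrt m < Real.sqrt ((m:ℝ) - l) := by
      calc Real.sqrt s * Real.sqrt m ≤ (∑ i, y i) * Real.sqrt m := by
            exact mul_le_mul_of_nonneg_right hys (le_of_lt sqm)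
        _ < 1 * Real.sqrt ((m:ℝ) - l) := h2
        _ = Real.sqrt ((m:ℝ) - l) := one_mul _
    have q1 : t * m < l := by
      have a1 := Real.sq_sqrt ht0
      have a2 := Real.sq_sqrt hm0.le
      have a3 := Real.sq_sqrt hl0.le
      nlinarith [mul_lt_mul' k1.le k1 (by positivity) sql, a1, a2, a3]
    have q2 : s * m < (m:ℝ) - l := by
      have a1 := Real.sq_sqrt hs0
      have a2 := Real.sq_sqrt hm0.le
      have a3 := Real.sq_sqrt hml0.le
      nlinarith [mul_lt_mul' k2.le k2 (by positivity) sqml, a1, a2, a3]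
    have : (t + s) * m < m := by linarith
    rw [hnorm, one_mul] at this
    exact lt_irrefl _ this
end

section
/- Let T be an n×n stochastic matrix with 1 a simple eigenvalue, and let u, v be left and right singular vectors of I − T corresponding to a singular value σ > 0, with u^⊤ = [u₁^⊤ | −u₂^⊤ | 0^⊤] where u₁ ∈ ℝ^ℓ and u₂ ∈ ℝ^{m−ℓ} are positive vectors. Partition T conformally with blocks T₁₁ (size ℓ×ℓ) and T₂₂ (size (m−ℓ)×(m−ℓ)). Then max{ (u₁^⊤T₁₁𝟏)/(u₁^⊤𝟏), (u₂^⊤T₂₂𝟏)/(u₂^⊤𝟏) } ≥ 1 − σ√m ≥ 1 − σ√n. -/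
open Matrix BigOperators

set_option maxHeartbeats 1000000 in
/-- Suppose `T` is an `n × n` stochastic matrix with `1` a simple eigenvalue, and `u, v`
are unit left and right singular vectors of `I - T` for a singular value `σ > 0`, with
`u = [u₁; -u₂; 0]` where `u₁ ∈ ℝ^ℓ`, `u₂ ∈ ℝ^{m-ℓ}` are positive.  Then
`max{ u₁ᵀT₁₁𝟏/u₁ᵀ𝟏, u₂ᵀT₂₂𝟏/u₂ᵀ𝟏 } ≥ 1 - σ√m ≥ 1 - σ√n`. -/
theorem stmt8 {n l m : ℕ} (hl : 1 ≤ l) (hlm : l < m) (hmn : m ≤ n)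
    (T : Matrix (Fin n) (Fin n) ℝ)
    (hTpos : ∀ i j, 0 ≤ T i j) (hTrow : ∀ i, ∑ j, T i j = 1)
    (hsimple : (Matrix.charpoly T).rootMultiplicity 1 = 1)
    (σ : ℝ) (hσ : 0 < σ) (u v : Fin n → ℝ)
    (hu : ∑ i, u i ^ 2 = 1) (hv : ∑ i, v i ^ 2 = 1)
    (hleft : Matrix.vecMul u (1 - T) = σ • v)
    (hright : Matrix.mulVec (1 - T) v = σ • u)
    (hu1 : ∀ i : Fin n, (i : ℕ) < l → 0 < u i)
    (hu2 : ∀ i : Fin n, l ≤ (i : ℕ) → (i : ℕ) < m → u i < 0)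
    (hu0 : ∀ i : Fin n, m ≤ (i : ℕ) → u i = 0) :
    (1 - σ * Real.sqrt m ≤
      max
        ((∑ i ∈ Finset.univ.filter (fun i : Fin n => (i : ℕ) < l),
            ∑ j ∈ Finset.univ.filter (fun j : Fin n => (j : ℕ) < l), u i * T i j) /
          (∑ i ∈ Finset.univ.filter (fun i : Fin n => (i : ℕ) < l), u i))
        ((∑ i ∈ Finset.univ.filter (fun i : Fin n => l ≤ (i : ℕ) ∧ (i : ℕ) < m),
            ∑ j ∈ Finset.univ.filter (fun j : Fin n => l ≤ (j : ℕ) ∧ (j : ℕ) < m),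
              (-u i) * T i j) /
          (∑ i ∈ Finset.univ.filter (fun i : Fin n => l ≤ (i : ℕ) ∧ (i : ℕ) < m), -u i)))
    ∧ 1 - σ * Real.sqrt n ≤ 1 - σ * Real.sqrt m := by
  classical
  have hmR : (0:ℝ) ≤ (m:ℝ) := Nat.cast_nonneg m
  constructor
  swap
  · have hs : Real.sqrt m ≤ Real.sqrt n := Real.sqrt_le_sqrt (by exact_mod_cast hmn)
    nlinarith [hσ.le]
  set S1 := Finset.univ.filter (fun i : Fin n => (i : ℕ) < l) with hS1
  set S2 := Finset.univ.filter (fun i : Fin n => l ≤ (i : ℕ) ∧ (i : ℕ) < m) with hS2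
  set Sm := Finset.univ.filter (fun i : Fin n => (i : ℕ) < m) with hSm
  -- split of Sm
  have hsplit : ∀ g : Fin n → ℝ, ∑ i ∈ Sm, g i = ∑ i ∈ S1, g i + ∑ i ∈ S2, g i := by
    intro g
    have e1 : Sm.filter (fun i : Fin n => (i:ℕ) < l) = S1 := by
      ext i; simp only [hSm, hS1, Finset.mem_filter, Finset.mem_univ, true_and]
      omega
    have e2 : Sm.filter (fun i : Fin n => ¬ (i:ℕ) < l) = S2 := by
      ext i; simp only [hSm, hS2, Finset.mem_filter, Finset.mem_univ, true_and]
      omega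
    rw [← Finset.sum_filter_add_sum_filter_not Sm (fun i : Fin n => (i:ℕ) < l) g, e1, e2]
  -- sums over univ vanish off Sm when weighted by u
  have husum : ∀ g : Fin n → ℝ, ∑ i, u i * g i
      = ∑ i ∈ S1, u i * g i + ∑ i ∈ S2, u i * g i := by
    intro g
    rw [← hsplit]
    refine (Finset.sum_subset (Finset.subset_univ Sm) ?_).symm
    intro i _ hi
    simp only [hSm, Finset.mem_filter, Finset.mem_univ, true_and] at hi
    rw [hu0 i (by omega)]; ring
  -- pointwise consequence of hleft
  have key : ∀ j, u j - ∑ i, u i * T i j = σ * v j := by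
    intro j
    have h := congrFun hleft j
    simp only [Matrix.vecMul, dotProduct, Matrix.sub_apply, Matrix.one_apply, mul_sub,
      Finset.sum_sub_distrib, Pi.smul_apply, smul_eq_mul] at h
    simpa [Finset.sum_ite_eq' Finset.univ j u] using h
  set a := ∑ i ∈ S1, u i with hadef
  set b := ∑ i ∈ S2, -u i with hbdef
  set N1 := ∑ i ∈ S1, ∑ j ∈ S1, u i * T i j with hN1
  set N2 := ∑ i ∈ S2, ∑ j ∈ S2, (-u i) * T i j with hN2
  have hS1ne : S1.Nonempty := ⟨⟨0, by omega⟩, by simp [hS1]; omega⟩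
  have hS2ne : S2.Nonempty := ⟨⟨l, by omega⟩, by simp [hS2]; omega⟩
  have ha : 0 < a := Finset.sum_pos (fun i hi => hu1 i (by simp [hS1] at hi; exact hi)) hS1ne
  have hb : 0 < b := Finset.sum_pos (fun i hi => by
    simp only [hS2, Finset.mem_filter, Finset.mem_univ, true_and] at hi
    have := hu2 i hi.1 hi.2; linarith) hS2ne
  -- inequality 1
  have ineq1 : a - N1 ≤ σ * ∑ j ∈ S1, v j := by
    have hsum : ∑ j ∈ S1, (u j - ∑ i, u i * T i j) = σ * ∑ j ∈ S1, v j := by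
      rw [Finset.mul_sum]; exact Finset.sum_congr rfl (fun j _ => key j)
    rw [Finset.sum_sub_distrib] at hsum
    have hinner : ∑ j ∈ S1, ∑ i, u i * T i j
        = N1 + ∑ j ∈ S1, ∑ i ∈ S2, u i * T i j := by
      rw [Finset.sum_congr rfl (fun j _ => husum (fun i => T i j)),
        Finset.sum_add_distrib, hN1, Finset.sum_comm]
    have hcross : ∑ j ∈ S1, ∑ i ∈ S2, u i * T i j ≤ 0 := by
      apply Finset.sum_nonpos; intro j _
      apply Finset.sum_nonpos; intro i hi
      simp only [hS2, Finset.mem_filter, Finset.mem_univ, true_and] at hi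
      exact mul_nonpos_of_nonpos_of_nonneg (hu2 i hi.1 hi.2).le (hTpos i j)
    rw [hinner] at hsum
    linarith [hsum]
  -- inequality 2
  have ineq2 : b - N2 ≤ -(σ * ∑ j ∈ S2, v j) := by
    have hsum : ∑ j ∈ S2, (u j - ∑ i, u i * T i j) = σ * ∑ j ∈ S2, v j := by
      rw [Finset.mul_sum]; exact Finset.sum_congr rfl (fun j _ => key j)
    rw [Finset.sum_sub_distrib] at hsum
    have hub : ∑ j ∈ S2, u j = -b := by rw [hbdef, ← Finset.sum_neg_distrib]; simp
    have hinner : ∑ j ∈ S2, ∑ i, u i * T i j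
        = (∑ j ∈ S2, ∑ i ∈ S1, u i * T i j) + (-N2) := by
      rw [Finset.sum_congr rfl (fun j _ => husum (fun i => T i j)),
        Finset.sum_add_distrib, hN2, Finset.sum_comm (s := S2) (t := S2)]
      congr 1
      rw [← Finset.sum_neg_distrib]
      apply Finset.sum_congr rfl; intro j _
      rw [← Finset.sum_neg_distrib]
      apply Finset.sum_congr rfl; intro i _; ring
    have hcross : 0 ≤ ∑ j ∈ S2, ∑ i ∈ S1, u i * T i j := by
      apply Finset.sum_nonneg; intro j _
      apply Finset.sum_nonneg; intro i hi
      simp only [hS1, Finset.mem_filter, Finset.mem_univ, true_and] at hi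
      exact mul_nonneg (hu1 i hi).le (hTpos i j)
    rw [hinner, hub] at hsum
    linarith [hsum]
  -- Cauchy-Schwarz for D
  have hcard : Sm.card ≤ m := by
    calc Sm.card = (Sm.image (fun i : Fin n => (i:ℕ))).card :=
          (Finset.card_image_of_injective _ Fin.val_injective).symm
      _ ≤ (Finset.range m).card := by
          apply Finset.card_le_card
          intro x hx
          simp only [Finset.mem_image, hSm, Finset.mem_filter, Finset.mem_univ, true_and] at hx
          obtain ⟨i, hi, rfl⟩ := hx
          simpa using hi
      _ = m := Finset.card_range m
  set w : Fin n → ℝ := fun j => if (j:ℕ) < l then 1 else -1 with hw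
  have hD : ∑ j ∈ Sm, w j * v j = (∑ j ∈ S1, v j) - ∑ j ∈ S2, v j := by
    rw [hsplit (fun j => w j * v j)]
    have h1 : ∑ j ∈ S1, w j * v j = ∑ j ∈ S1, v j := by
      apply Finset.sum_congr rfl; intro j hj
      simp only [hS1, Finset.mem_filter, Finset.mem_univ, true_and] at hj
      simp [hw, hj]
    have h2 : ∑ j ∈ S2, w j * v j = -∑ j ∈ S2, v j := by
      rw [← Finset.sum_neg_distrib]
      apply Finset.sum_congr rfl; intro j hj
      simp only [hS2, Finset.mem_filter, Finset.mem_univ, true_and] at hj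
      simp [hw, Nat.not_lt.mpr hj.1]
    rw [h1, h2]; ring
  have hvSm : ∑ j ∈ Sm, v j ^ 2 ≤ 1 := by
    rw [← hv]
    exact Finset.sum_le_sum_of_subset_of_nonneg (Finset.subset_univ Sm)
      (fun i _ _ => sq_nonneg _)
  have hwSm : ∑ j ∈ Sm, w j ^ 2 = Sm.card := by
    rw [Finset.sum_congr rfl (fun j _ => by
      by_cases h : (j:ℕ) < l <;> simp [hw, h] : ∀ j ∈ Sm, w j ^ 2 = 1)]
    simp
  have hCS : ((∑ j ∈ S1, v j) - ∑ j ∈ S2, v j) ≤ Real.sqrt m := by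
    have h2 := Finset.sum_mul_sq_le_sq_mul_sq Sm w v
    rw [hD, hwSm] at h2
    have hc : (Sm.card : ℝ) ≤ (m:ℝ) := by exact_mod_cast hcard
    have hsq : ((∑ j ∈ S1, v j) - ∑ j ∈ S2, v j)^2 ≤ (m:ℝ) := by
      calc ((∑ j ∈ S1, v j) - ∑ j ∈ S2, v j)^2 ≤ (Sm.card : ℝ) * ∑ j ∈ Sm, v j ^ 2 := h2
        _ ≤ (m:ℝ) * 1 := by
            apply mul_le_mul hc hvSm (Finset.sum_nonneg fun i _ => sq_nonneg _) hmR
        _ = (m:ℝ) := mul_one _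
    nlinarith [Real.sqrt_nonneg (m:ℝ), Real.sq_sqrt hmR]
  -- a + b ≥ 1
  have hab : 1 ≤ a + b := by
    have hone : ∑ i ∈ Sm, u i ^ 2 = 1 := by
      rw [← hu]
      refine Finset.sum_subset (Finset.subset_univ Sm) ?_
      intro i _ hi
      simp only [hSm, Finset.mem_filter, Finset.mem_univ, true_and] at hi
      rw [hu0 i (by omega)]; ring
    have habs : ∑ i ∈ Sm, |u i| = a + b := by
      rw [hsplit (fun i => |u i|)]
      congr 1
      · apply Finset.sum_congr rfl; intro i hi
        simp only [hS1, Finset.mem_filter, Finset.mem_univ, true_and] at hi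
        exact abs_of_pos (hu1 i hi)
      · apply Finset.sum_congr rfl; intro i hi
        simp only [hS2, Finset.mem_filter, Finset.mem_univ, true_and] at hi
        exact abs_of_neg (hu2 i hi.1 hi.2)
    have h2 : ∑ i ∈ Sm, |u i| ^ 2 ≤ (∑ i ∈ Sm, |u i|) ^ 2 :=
      Finset.sum_sq_le_sq_sum_of_nonneg (fun i _ => abs_nonneg _)
    simp only [sq_abs] at h2
    rw [hone, habs] at h2
    by_contra hcon
    push_neg at hcon
    have h4 : (a + b) ^ 2 < 1 ^ 2 :=
      pow_lt_pow_left₀ hcon (by linarith) (by norm_num)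
    simp only [one_pow] at h4
    linarith
  -- conclude
  by_cases hM : (1:ℝ) ≤ max (N1 / a) (N2 / b)
  · have : 0 ≤ σ * Real.sqrt m := mul_nonneg hσ.le (Real.sqrt_nonneg _)
    linarith
  push_neg at hM
  have hcomb : (a - N1) + (b - N2) ≤ σ * Real.sqrt m := by
    have := mul_le_mul_of_nonneg_left hCS hσ.le
    calc (a - N1) + (b - N2)
        ≤ σ * ∑ j ∈ S1, v j + -(σ * ∑ j ∈ S2, v j) := add_le_add ineq1 ineq2
      _ = σ * ((∑ j ∈ S1, v j) - ∑ j ∈ S2, v j) := by ring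
      _ ≤ σ * Real.sqrt m := this
  set M := max (N1 / a) (N2 / b) with hMdef
  have hm1 : N1 ≤ M * a := (div_le_iff₀ ha).mp (le_max_left _ _)
  have hm2 : N2 ≤ M * b := (div_le_iff₀ hb).mp (le_max_right _ _)
  have hx : (0:ℝ) ≤ (a + b - 1) * (1 - M) :=
    mul_nonneg (by linarith) (by linarith)
  have hx2 : 1 - M ≤ a + b - (M * a + M * b) := by nlinarith [hx]
  linarith [hcomb, hm1, hm2, hx2]
end

section
/- With the setup of the singular vector partition (u^⊤(I−T) = σv^⊤, u = [u₁; −u₂; 0] with u₁, u₂ positive), if x₁ is a right Perron vector of T₁₁ normalized so that u₁^⊤x₁ = 1, then the spectral radius ρ₁ of T₁₁ satisfies ρ₁ ≥ 1 − σ·(v₁^⊤x₁), where v₁ is the corresponding subvector of v. -/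
open Matrix BigOperators

lemma sum_castLE_aux {n l : ℕ} (h : l ≤ n) (f : Fin n → ℝ)
    (hf : ∀ j : Fin n, l ≤ (j : ℕ) → f j = 0) :
    ∑ j, f j = ∑ j : Fin l, f (Fin.castLE h j) := by
  rw [show (∑ j : Fin l, f (Fin.castLE h j)) = ∑ j ∈ Finset.univ.map (Fin.castLEEmb h), f j by rw [Finset.sum_map]; rfl]
  refine (Finset.sum_subset (Finset.subset_univ _) ?_).symm
  intro j _ hj
  refine hf j ?_
  by_contra hlt
  push_neg at hlt
  exact hj (Finset.mem_map.2 ⟨⟨j, hlt⟩, Finset.mem_univ _, by simp⟩)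

/-- With the singular vector partition setup (`uᵀ(I-T) = σvᵀ`, `u = [u₁; -u₂; 0]` with
`u₁, u₂` positive), if `x₁ ≥ 0` is a right Perron vector of the principal submatrix `T₁₁`
(for its spectral radius `ρ₁`) normalized so that `u₁ᵀx₁ = 1`, then
`ρ₁ ≥ 1 - σ (v₁ᵀ x₁)`. -/
theorem stmt9 {n l m : ℕ} (hl : 1 ≤ l) (hlm : l < m) (hmn : m ≤ n)
    (T : Matrix (Fin n) (Fin n) ℝ)
    (hTpos : ∀ i j, 0 ≤ T i j) (hTrow : ∀ i, ∑ j, T i j = 1)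
    (σ : ℝ) (hσ : 0 < σ) (u v : Fin n → ℝ)
    (hu : ∑ i, u i ^ 2 = 1) (hv : ∑ i, v i ^ 2 = 1)
    (hleft : Matrix.vecMul u (1 - T) = σ • v)
    (hright : Matrix.mulVec (1 - T) v = σ • u)
    (hu1 : ∀ i : Fin n, (i : ℕ) < l → 0 < u i)
    (hu2 : ∀ i : Fin n, l ≤ (i : ℕ) → (i : ℕ) < m → u i < 0)
    (hu0 : ∀ i : Fin n, m ≤ (i : ℕ) → u i = 0)
    (x₁ : Fin l → ℝ) (hx₁ : ∀ i, 0 ≤ x₁ i) (ρ₁ : ℝ)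
    (hperron :
      Matrix.mulVec
        (Matrix.of fun i j : Fin l =>
          T (Fin.castLE (hlm.le.trans hmn) i) (Fin.castLE (hlm.le.trans hmn) j)) x₁
        = ρ₁ • x₁)
    (hnorm : ∑ i : Fin l, u (Fin.castLE (hlm.le.trans hmn) i) * x₁ i = 1) :
    1 - σ * (∑ i : Fin l, v (Fin.castLE (hlm.le.trans hmn) i) * x₁ i) ≤ ρ₁ := by
  have hln : l ≤ n := hlm.le.trans hmn
  -- extend x₁ by zero
  set x : Fin n → ℝ := fun j => if h : (j : ℕ) < l then x₁ ⟨j, h⟩ else 0 with hxdef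
  have hx0 : ∀ j : Fin n, l ≤ (j : ℕ) → x j = 0 := by
    intro j hj; simp [hxdef, Nat.not_lt.2 hj]
  have hxcast : ∀ j : Fin l, x (Fin.castLE hln j) = x₁ j := by
    intro j; simp [hxdef, j.isLt]
  have hxnn : ∀ j, 0 ≤ x j := by
    intro j; by_cases h : (j : ℕ) < l
    · simp [hxdef, h, hx₁]
    · simp [hxdef, h]
  -- Tx on first block
  have hTx : ∀ i : Fin l, T.mulVec x (Fin.castLE hln i) = ρ₁ * x₁ i := by
    intro i
    have h1 : T.mulVec x (Fin.castLE hln i)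
        = ∑ j : Fin l, T (Fin.castLE hln i) (Fin.castLE hln j) * x₁ j := by
      rw [Matrix.mulVec, dotProduct]
      rw [sum_castLE_aux hln (fun j => T (Fin.castLE hln i) j * x j)
        (by intro j hj; simp [hx0 j hj])]
      exact Finset.sum_congr rfl fun j _ => by rw [hxcast]
    have h2 := congrFun hperron i
    simp only [Matrix.mulVec, dotProduct, Matrix.of_apply, Pi.smul_apply,
      smul_eq_mul] at h2
    rw [h1, h2]
  -- key identity: 1 - ∑ i, u i * (T.mulVec x) i = σ * ∑ v₁ x₁
  have hdot : Matrix.vecMul u (1 - T) ⬝ᵥ x = σ * ∑ i : Fin l, v (Fin.castLE hln i) * x₁ i := by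
    rw [hleft]
    rw [dotProduct]
    rw [sum_castLE_aux hln (fun j => (σ • v) j * x j)
      (by intro j hj; simp [hx0 j hj])]
    rw [Finset.mul_sum]
    exact Finset.sum_congr rfl fun j _ => by
      simp only [Pi.smul_apply, smul_eq_mul, hxcast]; ring
  have hdot2 : Matrix.vecMul u (1 - T) ⬝ᵥ x
      = 1 - ∑ i, u i * T.mulVec x i := by
    rw [← Matrix.dotProduct_mulVec]
    have : Matrix.mulVec (1 - T) x = x - T.mulVec x := by
      rw [Matrix.sub_mulVec, Matrix.one_mulVec]
    rw [this]
    simp only [dotProduct, Pi.sub_apply, mul_sub, Finset.sum_sub_distrib]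
    have hux : ∑ i, u i * x i = 1 := by
      rw [sum_castLE_aux hln (fun j => u j * x j)
        (by intro j hj; simp [hx0 j hj])]
      rw [← hnorm]
      exact Finset.sum_congr rfl fun j _ => by rw [hxcast]
    rw [hux]
  -- now bound ∑ i, u i * (T.mulVec x) i ≤ ρ₁
  have hsplit := Finset.sum_filter_add_sum_filter_not Finset.univ
    (fun i : Fin n => (i : ℕ) < l) (fun i => u i * T.mulVec x i)
  have hfirst : ∑ i ∈ Finset.univ.filter (fun i : Fin n => (i : ℕ) < l),
      u i * T.mulVec x i = ρ₁ := by
    have he : Finset.univ.filter (fun i : Fin n => (i : ℕ) < l)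
        = Finset.univ.map (Fin.castLEEmb hln) := by
      ext j
      simp only [Finset.mem_filter, Finset.mem_univ, true_and, Finset.mem_map]
      constructor
      · intro hj; refine ⟨⟨j, hj⟩, ?_⟩; ext; simp
      · rintro ⟨a, rfl⟩; exact a.isLt
    rw [he, Finset.sum_map]
    have : ∀ j : Fin l, u ((Fin.castLEEmb hln) j) * T.mulVec x ((Fin.castLEEmb hln) j)
        = ρ₁ * (u (Fin.castLE hln j) * x₁ j) := by
      intro j
      have := hTx j
      show u (Fin.castLE hln j) * T.mulVec x (Fin.castLE hln j) = _
      rw [this]; ring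
    rw [Finset.sum_congr rfl fun j _ => this j, ← Finset.mul_sum, hnorm, mul_one]
  have hrest : ∑ i ∈ Finset.univ.filter (fun i : Fin n => ¬ (i : ℕ) < l),
      u i * T.mulVec x i ≤ 0 := by
    apply Finset.sum_nonpos
    intro i hi
    simp only [Finset.mem_filter, Finset.mem_univ, true_and, Nat.not_lt] at hi
    have hTxnn : 0 ≤ T.mulVec x i := by
      rw [Matrix.mulVec, dotProduct]
      apply Finset.sum_nonneg
      intro j _
      exact mul_nonneg (hTpos i j) (hxnn j)
    by_cases him : (i : ℕ) < m
    · exact mul_nonpos_of_nonpos_of_nonneg (hu2 i hi him).le hTxnn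
    · rw [hu0 i (Nat.le_of_not_lt him)]; ring_nf; simp
  have hbound : ∑ i, u i * T.mulVec x i ≤ ρ₁ := by
    rw [← hsplit, hfirst]; linarith
  have := hdot.symm.trans hdot2
  linarith
end

section
/- Let T be an n×n stochastic matrix partitioned into m² blocks with average row sum of each diagonal block T_{kk} at least 1 − δ, δ ∈ (0,1). Then T = B + E where B is a direct sum of stochastic matrices B₁,…,B_m (obtained via the dangling node fix of each diagonal block) and ‖E‖_∞ ≤ 2·min{1, δn} and ‖E‖_F ≤ min{2δn, √(δ²n² + δm), √(δn + δm)}. -/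
open Matrix BigOperators

/-- Let `T` be stochastic, partitioned into `m²` blocks via a surjective assignment
`c : Fin n → Fin m`, with average row sum of each diagonal block at least `1 - δ`.
Then `T = B + E`, where `B` is the direct sum of the dangling node fixes of the
diagonal blocks (hence a direct sum of stochastic matrices), and
`‖E‖_∞ ≤ 2 min{1, δn}` and `‖E‖_F ≤ min{2δn, √(δ²n² + δm), √(δn + δm)}`. -/
theorem stmt11 {n m : ℕ} (T : Matrix (Fin n) (Fin n) ℝ)
    (hTpos : ∀ i j, 0 ≤ T i j) (hTrow : ∀ i, ∑ j, T i j = 1)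
    (δ : ℝ) (hδ0 : 0 < δ) (hδ1 : δ < 1)
    (c : Fin n → Fin m) (hc : Function.Surjective c)
    (hdiag : ∀ k : Fin m,
      (1 - δ) * ((Finset.univ.filter (fun i : Fin n => c i = k)).card : ℝ) ≤
        ∑ i ∈ Finset.univ.filter (fun i : Fin n => c i = k),
          ∑ j ∈ Finset.univ.filter (fun j : Fin n => c j = k), T i j)
    (B E : Matrix (Fin n) (Fin n) ℝ)
    (hB : B = Matrix.of fun i j =>
      if c i = c j then
        T i j + ((Finset.univ.filter (fun i' : Fin n => c i' = c i)).card : ℝ)⁻¹ *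
          (1 - ∑ j' ∈ Finset.univ.filter (fun j' : Fin n => c j' = c i), T i j')
      else 0)
    (hE : E = T - B) :
    infNorm E ≤ 2 * min 1 (δ * n) ∧
      Real.sqrt (∑ i, ∑ j, E i j ^ 2) ≤
        min (2 * δ * n)
          (min (Real.sqrt (δ ^ 2 * n ^ 2 + δ * m)) (Real.sqrt (δ * n + δ * m))) := by
  classical
  -- block of i, block size, deficiency
  set Bl : Fin n → Finset (Fin n) := fun i => Finset.univ.filter (fun j => c j = c i) with hBl
  set d : Fin n → ℝ := fun i => 1 - ∑ j ∈ Bl i, T i j with hd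
  set p : Fin n → ℕ := fun i => (Bl i).card with hp
  have hmem : ∀ i, i ∈ Bl i := fun i => by simp [hBl]
  have hp1 : ∀ i, 1 ≤ p i := fun i => Finset.card_pos.mpr ⟨i, hmem i⟩
  have hppos : ∀ i, (0:ℝ) < (p i : ℝ) := fun i => by exact_mod_cast hp1 i
  have hpn : ∀ i, (p i : ℝ) ≤ n := fun i => by
    have := Finset.card_le_univ (Bl i)
    simpa [hp] using (Nat.cast_le.mpr this : ((Bl i).card : ℝ) ≤ (Fintype.card (Fin n) : ℝ))
  have hd0 : ∀ i, 0 ≤ d i := by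
    intro i
    have : ∑ j ∈ Bl i, T i j ≤ ∑ j, T i j :=
      Finset.sum_le_sum_of_subset_of_nonneg (Finset.subset_univ _) (fun j _ _ => hTpos i j)
    simp only [hd]
    linarith [hTrow i]
  have hd1 : ∀ i, d i ≤ 1 := by
    intro i
    have : (0:ℝ) ≤ ∑ j ∈ Bl i, T i j := Finset.sum_nonneg fun j _ => hTpos i j
    simp only [hd]; linarith
  -- fibers
  have hfib : ∀ i, Bl i = Finset.univ.filter (fun j => c j = c i) := fun i => rfl
  have hBlk : ∀ i k, c i = k → Bl i = Finset.univ.filter (fun j => c j = k) := by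
    intro i k hik; rw [hfib, hik]
  -- per-fiber deficiency bound
  have hfibd : ∀ k : Fin m,
      ∑ i ∈ Finset.univ.filter (fun i => c i = k), d i ≤
        δ * ((Finset.univ.filter (fun i : Fin n => c i = k)).card : ℝ) := by
    intro k
    have h1 : ∑ i ∈ Finset.univ.filter (fun i => c i = k), d i =
        ((Finset.univ.filter (fun i : Fin n => c i = k)).card : ℝ) -
          ∑ i ∈ Finset.univ.filter (fun i => c i = k),
            ∑ j ∈ Finset.univ.filter (fun j : Fin n => c j = k), T i j := by
      rw [Finset.sum_sub_distrib]
      congr 1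
      · simp
      · apply Finset.sum_congr rfl
        intro i hi
        rw [hBlk i k (by simpa using hi)]
    have := hdiag k
    rw [h1]; nlinarith [this]
  -- each d i ≤ δ n
  have hdδn : ∀ i, d i ≤ δ * n := by
    intro i
    have h1 : d i ≤ ∑ i' ∈ Finset.univ.filter (fun i' => c i' = c i), d i' := by
      apply Finset.single_le_sum (fun i' _ => hd0 i') (by simp)
    have h2 := hfibd (c i)
    have h3 : ((Finset.univ.filter (fun i' : Fin n => c i' = c i)).card : ℝ) ≤ n := by
      have := Finset.card_le_univ (Finset.univ.filter (fun i' : Fin n => c i' = c i))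
      exact_mod_cast le_trans (Nat.cast_le.mpr this) (by simp)
    nlinarith
  -- total deficiency
  have hdtot : ∑ i, d i ≤ δ * n := by
    have h1 : ∑ i, d i = ∑ k : Fin m, ∑ i ∈ Finset.univ.filter (fun i => c i = k), d i :=
      (Finset.sum_fiberwise_of_maps_to (fun i _ => Finset.mem_univ (c i)) d).symm
    have h2 : ∑ k : Fin m, ((Finset.univ.filter (fun i : Fin n => c i = k)).card : ℝ) = n := by
      have := Finset.card_eq_sum_card_fiberwise
        (f := c) (s := (Finset.univ : Finset (Fin n))) (t := Finset.univ)
        (fun i _ => Finset.mem_univ (c i))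
      have : (Finset.univ : Finset (Fin n)).card =
          ∑ k : Fin m, (Finset.univ.filter (fun i => c i = k)).card := this
      calc ∑ k : Fin m, ((Finset.univ.filter (fun i : Fin n => c i = k)).card : ℝ)
          = (((Finset.univ : Finset (Fin n)).card : ℕ) : ℝ) := by
            rw [this]; push_cast; ring
        _ = n := by simp
    calc ∑ i, d i = ∑ k : Fin m, ∑ i ∈ Finset.univ.filter (fun i => c i = k), d i := h1
      _ ≤ ∑ k : Fin m, δ * ((Finset.univ.filter (fun i : Fin n => c i = k)).card : ℝ) :=
          Finset.sum_le_sum (fun k _ => hfibd k)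
      _ = δ * n := by rw [← Finset.mul_sum, h2]
  -- value of E
  have hEval : ∀ i j, E i j = if c i = c j then -((p i : ℝ)⁻¹ * d i) else T i j := by
    intro i j
    simp only [hE, hB, Matrix.sub_apply, Matrix.of_apply]
    by_cases h : c i = c j <;> simp [h, hp, hd, hBl]
  -- off-block row sum of T
  have hoff : ∀ i, ∑ j ∈ Finset.univ.filter (fun j => ¬ c j = c i), T i j = d i := by
    intro i
    have := Finset.sum_filter_add_sum_filter_not Finset.univ (fun j => c j = c i) (T i)
    rw [hTrow i] at this
    simp only [hd, hBl]
    linarith [this]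
  -- row abs sums
  have hrowabs : ∀ i, ∑ j, |E i j| = 2 * d i := by
    intro i
    rw [← Finset.sum_filter_add_sum_filter_not Finset.univ (fun j => c j = c i) (fun j => |E i j|)]
    have h1 : ∑ j ∈ Finset.univ.filter (fun j => c j = c i), |E i j| = d i := by
      have : ∀ j ∈ Finset.univ.filter (fun j => c j = c i), |E i j| = (p i : ℝ)⁻¹ * d i := by
        intro j hj
        have hcj : c j = c i := by simpa using hj
        rw [hEval i j, if_pos hcj.symm, abs_neg, abs_of_nonneg]
        exact mul_nonneg (inv_nonneg.mpr (le_of_lt (hppos i))) (hd0 i)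
      rw [Finset.sum_congr rfl this, Finset.sum_const]
      have : ((Finset.univ.filter (fun j => c j = c i)).card : ℝ) = (p i : ℝ) := by
        simp [hp, hBl]
      rw [nsmul_eq_mul, this, ← mul_assoc, mul_inv_cancel₀ (hppos i).ne', one_mul]
    have h2 : ∑ j ∈ Finset.univ.filter (fun j => ¬ c j = c i), |E i j| = d i := by
      rw [← hoff i]
      apply Finset.sum_congr rfl
      intro j hj
      have hcj : ¬ c j = c i := by simpa using hj
      rw [hEval i j, if_neg (fun h => hcj h.symm), abs_of_nonneg (hTpos i j)]
    rw [h1, h2]; ring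
  -- row square sums
  have hrowsq : ∀ i, ∑ j, E i j ^ 2 =
      (p i : ℝ)⁻¹ * d i ^ 2 + ∑ j ∈ Finset.univ.filter (fun j => ¬ c j = c i), T i j ^ 2 := by
    intro i
    rw [← Finset.sum_filter_add_sum_filter_not Finset.univ (fun j => c j = c i)
      (fun j => E i j ^ 2)]
    congr 1
    · have : ∀ j ∈ Finset.univ.filter (fun j => c j = c i),
          E i j ^ 2 = ((p i : ℝ)⁻¹ * d i) ^ 2 := by
        intro j hj
        have hcj : c j = c i := by simpa using hj
        rw [hEval i j, if_pos hcj.symm]; ring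
      rw [Finset.sum_congr rfl this, Finset.sum_const]
      have hc' : ((Finset.univ.filter (fun j => c j = c i)).card : ℝ) = (p i : ℝ) := by
        simp [hp, hBl]
      rw [nsmul_eq_mul, hc']
      have := (hppos i).ne'
      field_simp
    · apply Finset.sum_congr rfl
      intro j hj
      have hcj : ¬ c j = c i := by simpa using hj
      rw [hEval i j, if_neg (fun h => hcj h.symm)]
  -- off-block sq sum bound
  have hoffsq : ∀ i, ∑ j ∈ Finset.univ.filter (fun j => ¬ c j = c i), T i j ^ 2 ≤ d i ^ 2 := by
    intro i
    calc ∑ j ∈ Finset.univ.filter (fun j => ¬ c j = c i), T i j ^ 2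
        ≤ (∑ j ∈ Finset.univ.filter (fun j => ¬ c j = c i), T i j) ^ 2 :=
          Finset.sum_sq_le_sq_sum_of_nonneg (fun j _ => hTpos i j)
      _ = d i ^ 2 := by rw [hoff i]
  -- block part global bound
  have hblocksq : ∑ i, (p i : ℝ)⁻¹ * d i ^ 2 ≤ δ * m := by
    have h1 : ∑ i, (p i : ℝ)⁻¹ * d i ^ 2 =
        ∑ k : Fin m, ∑ i ∈ Finset.univ.filter (fun i => c i = k), (p i : ℝ)⁻¹ * d i ^ 2 :=
      (Finset.sum_fiberwise_of_maps_to (fun i _ => Finset.mem_univ (c i)) _).symm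
    rw [h1]
    have h2 : ∀ k : Fin m,
        ∑ i ∈ Finset.univ.filter (fun i => c i = k), (p i : ℝ)⁻¹ * d i ^ 2 ≤ δ := by
      intro k
      set q : ℝ := ((Finset.univ.filter (fun i : Fin n => c i = k)).card : ℝ) with hq
      have hq0 : 0 < q ∨ (Finset.univ.filter (fun i : Fin n => c i = k)) = ∅ := by
        rcases Finset.eq_empty_or_nonempty (Finset.univ.filter (fun i : Fin n => c i = k)) with h | h
        · exact Or.inr h
        · refine Or.inl ?_
          rw [hq]
          exact_mod_cast Finset.card_pos.mpr h
      rcases hq0 with hq0 | hq0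
      · have hpq : ∀ i ∈ Finset.univ.filter (fun i : Fin n => c i = k), (p i : ℝ) = q := by
          intro i hi
          have : c i = k := by simpa using hi
          simp only [hp, hq, hBl, this]
        calc ∑ i ∈ Finset.univ.filter (fun i => c i = k), (p i : ℝ)⁻¹ * d i ^ 2
            ≤ ∑ i ∈ Finset.univ.filter (fun i => c i = k), q⁻¹ * d i := by
              apply Finset.sum_le_sum
              intro i hi
              rw [hpq i hi]
              have h0 := hd0 i; have h1' := hd1 i
              have hqi : (0:ℝ) ≤ q⁻¹ := by positivity
              have hdd : d i ^ 2 ≤ d i := by nlinarith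
              exact mul_le_mul_of_nonneg_left hdd hqi
          _ = q⁻¹ * ∑ i ∈ Finset.univ.filter (fun i => c i = k), d i := by
              rw [Finset.mul_sum]
          _ ≤ q⁻¹ * (δ * q) := by
              apply mul_le_mul_of_nonneg_left (hfibd k) (by positivity)
          _ = δ := by field_simp
      · rw [hq0]; simp; linarith
    calc ∑ k : Fin m, ∑ i ∈ Finset.univ.filter (fun i => c i = k), (p i : ℝ)⁻¹ * d i ^ 2
        ≤ ∑ _k : Fin m, δ := Finset.sum_le_sum (fun k _ => h2 k)
      _ = δ * m := by simp [mul_comm]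
  -- sum of d squared bounds
  have hdsq1 : ∑ i, d i ^ 2 ≤ δ * n * (δ * n) := by
    calc ∑ i, d i ^ 2 ≤ ∑ i, δ * n * d i := by
          apply Finset.sum_le_sum
          intro i _
          have := hd0 i; have := hdδn i
          nlinarith
      _ = δ * n * ∑ i, d i := by rw [Finset.mul_sum]
      _ ≤ δ * n * (δ * n) := by
          apply mul_le_mul_of_nonneg_left hdtot (by positivity)
  have hdsq2 : ∑ i, d i ^ 2 ≤ δ * n := by
    calc ∑ i, d i ^ 2 ≤ ∑ i, d i := by
          apply Finset.sum_le_sum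
          intro i _
          have := hd0 i; have := hd1 i
          nlinarith
      _ ≤ δ * n := hdtot
  -- Frobenius squared bound pieces
  have hF : ∑ i, ∑ j, E i j ^ 2 ≤ (∑ i, (p i : ℝ)⁻¹ * d i ^ 2) + ∑ i, d i ^ 2 := by
    rw [← Finset.sum_add_distrib]
    apply Finset.sum_le_sum
    intro i _
    rw [hrowsq i]
    exact add_le_add_right (hoffsq i) _
  have hblock_le : ∑ i, (p i : ℝ)⁻¹ * d i ^ 2 ≤ ∑ i, d i ^ 2 := by
    apply Finset.sum_le_sum
    intro i _
    have h1 : (p i : ℝ)⁻¹ ≤ 1 := by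
      rw [inv_le_one_iff₀]
      right; exact_mod_cast hp1 i
    have : (0:ℝ) ≤ d i ^ 2 := sq_nonneg _
    nlinarith
  constructor
  · -- infinity norm
    rcases Nat.eq_zero_or_pos n with hn | hn
    · subst hn
      have : infNorm E = 0 := by
        simp [infNorm, Real.iSup_of_isEmpty]
      rw [this]
      have : δ * (0:ℕ) = 0 := by simp
      rw [this]
      simp
    · have : Nonempty (Fin n) := ⟨⟨0, hn⟩⟩
      apply ciSup_le
      intro i
      rw [hrowabs i]
      have h1 : d i ≤ min 1 (δ * n) := le_min (hd1 i) (hdδn i)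
      linarith
  · -- Frobenius norm
    apply le_min
    · have hS : ∑ i, ∑ j, E i j ^ 2 ≤ (2 * δ * n) ^ 2 := by
        have : ∑ i, ∑ j, E i j ^ 2 ≤ 2 * ∑ i, d i ^ 2 := by linarith
        nlinarith [hdsq1]
      calc Real.sqrt (∑ i, ∑ j, E i j ^ 2) ≤ Real.sqrt ((2 * δ * n) ^ 2) :=
            Real.sqrt_le_sqrt hS
        _ = 2 * δ * n := Real.sqrt_sq (by positivity)
    apply le_min
    · apply Real.sqrt_le_sqrt
      have : δ ^ 2 * n ^ 2 = δ * n * (δ * n) := by ring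
      rw [this]
      linarith [hF, hblocksq, hdsq1]
    · apply Real.sqrt_le_sqrt
      linarith [hF, hblocksq, hdsq2]
end

section
/- Let T be an n×n sub-stochastic matrix and dnf(T) = T + (1/n)(J − TJ) its dangling node fix. Then for any n×n stochastic matrix S: ‖T − dnf(T)‖_∞ ≤ ‖T − S‖_∞. -/
open Matrix BigOperators

/-- The dangling node fix of a square matrix: `dnf(T) = T + (1/n)(J - TJ)`,
where `J` is the all-ones matrix. -/
noncomputable def dnf {ι : Type*} [Fintype ι] (A : Matrix ι ι ℝ) : Matrix ι ι ℝ :=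
  A + ((Fintype.card ι : ℝ)⁻¹) •
    ((Matrix.of fun _ _ => (1 : ℝ)) - A * Matrix.of fun _ _ => (1 : ℝ))

/-- For a sub-stochastic matrix `T` and any stochastic matrix `S`,
`‖T - dnf(T)‖_∞ ≤ ‖T - S‖_∞`. -/
theorem stmt12 {n : ℕ} (hn : 0 < n) (T : Matrix (Fin n) (Fin n) ℝ)
    (hTpos : ∀ i j, 0 ≤ T i j) (hTrow : ∀ i, ∑ j, T i j ≤ 1)
    (S : Matrix (Fin n) (Fin n) ℝ)
    (hSpos : ∀ i j, 0 ≤ S i j) (hSrow : ∀ i, ∑ j, S i j = 1) :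
    infNorm (T - dnf T) ≤ infNorm (T - S) := by
  have hne : Nonempty (Fin n) := ⟨⟨0, hn⟩⟩
  have hnpos : (0:ℝ) < n := by exact_mod_cast hn
  unfold infNorm
  apply ciSup_mono (Set.Finite.bddAbove (Set.finite_range _))
  intro i
  have hrow : ∀ j, (T - dnf T) i j = -((n:ℝ)⁻¹ * (1 - ∑ k, T i k)) := by
    intro j
    simp [dnf, Matrix.sub_apply, Matrix.add_apply, Matrix.smul_apply,
      Matrix.mul_apply, Fintype.card_fin]
  have h1 : ∑ j, |(T - dnf T) i j| = 1 - ∑ k, T i k := by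
    have habs : ∀ j : Fin n, |(T - dnf T) i j| = (n:ℝ)⁻¹ * (1 - ∑ k, T i k) := by
      intro j
      rw [hrow j, abs_neg, abs_of_nonneg]
      exact mul_nonneg (inv_nonneg.mpr hnpos.le) (sub_nonneg.mpr (hTrow i))
    rw [Finset.sum_congr rfl fun j _ => habs j]
    rw [Finset.sum_const, Finset.card_univ, Fintype.card_fin, nsmul_eq_mul]
    field_simp
  rw [h1]
  calc 1 - ∑ k, T i k = ∑ j, (S i j - T i j) := by
        rw [Finset.sum_sub_distrib, hSrow i]
    _ ≤ ∑ j, |S i j - T i j| := Finset.sum_le_sum fun j _ => le_abs_self _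
    _ = ∑ j, |(T - S) i j| := by
        refine Finset.sum_congr rfl fun j _ => ?_
        rw [Matrix.sub_apply, abs_sub_comm]
end

section
/- Let T be an n×n sub-stochastic matrix and dnf(T) = T + (1/n)(J − TJ). Then for any n×n stochastic matrix S: ‖T − dnf(T)‖₂ ≤ ‖T − S‖₂ and ‖T − dnf(T)‖_F ≤ ‖T − S‖_F, i.e., dnf(T) is the closest stochastic matrix to T in both the operator 2-norm and the Frobenius norm. -/
open Matrix BigOperators

/-- For a sub-stochastic matrix `T` and any stochastic matrix `S`,
`‖T - dnf(T)‖₂ ≤ ‖T - S‖₂` and `‖T - dnf(T)‖_F ≤ ‖T - S‖_F`: the dangling node fix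
is the closest stochastic matrix to `T` in both the operator 2-norm and the
Frobenius norm. -/
theorem stmt13 {n : ℕ} (hn : 0 < n) (T : Matrix (Fin n) (Fin n) ℝ)
    (hTpos : ∀ i j, 0 ≤ T i j) (hTrow : ∀ i, ∑ j, T i j ≤ 1)
    (S : Matrix (Fin n) (Fin n) ℝ)
    (hSpos : ∀ i j, 0 ≤ S i j) (hSrow : ∀ i, ∑ j, S i j = 1) :
    sigma1 (T - dnf T) ≤ sigma1 (T - S) ∧
      Real.sqrt (∑ i, ∑ j, (T - dnf T) i j ^ 2) ≤
        Real.sqrt (∑ i, ∑ j, (T - S) i j ^ 2) := by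
  have hn' : (0:ℝ) < n := by exact_mod_cast hn
  set d : Fin n → ℝ := fun i => 1 - ∑ j, T i j with hd
  have hA : ∀ i j, (T - dnf T) i j = -(d i / n) := by
    intro i j
    simp only [dnf, Matrix.sub_apply, Matrix.add_apply, Matrix.smul_apply,
      Matrix.mul_apply, Matrix.of_apply, Fintype.card_fin, smul_eq_mul, mul_one, hd]
    field_simp
    ring
  have hB : ∀ i, ∑ j, (T - S) i j = -(d i) := by
    intro i
    simp only [Matrix.sub_apply, Finset.sum_sub_distrib, hSrow i, hd]
    ring
  set c := Real.sqrt ((∑ i, d i ^ 2) / n) with hc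
  -- Frobenius values
  have hFrobL : ∑ i, ∑ j, (T - dnf T) i j ^ 2 = (∑ i, d i ^ 2) / n := by
    have : ∀ i, ∑ j : Fin n, (T - dnf T) i j ^ 2 = d i ^ 2 / n := by
      intro i
      simp only [hA]
      rw [Finset.sum_const, Finset.card_univ, Fintype.card_fin, nsmul_eq_mul]
      field_simp
    rw [Finset.sum_congr rfl fun i _ => this i, ← Finset.sum_div]
  have hFrobR : ∀ i, d i ^ 2 / n ≤ ∑ j, (T - S) i j ^ 2 := by
    intro i
    have cs := Finset.sum_mul_sq_le_sq_mul_sq Finset.univ (fun j => (T - S) i j)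
      (fun _ => (1:ℝ))
    simp only [mul_one, one_pow, Finset.sum_const, Finset.card_univ, Fintype.card_fin,
      nsmul_eq_mul, hB i, neg_sq] at cs
    rw [div_le_iff₀ hn']
    linarith [cs]
  -- bddAbove lemma
  have bdd : ∀ (A : Matrix (Fin n) (Fin n) ℝ), BddAbove {r : ℝ | ∃ x : Fin n → ℝ,
      ∑ i, x i ^ 2 = 1 ∧ r = Real.sqrt (∑ i, (A.mulVec x i) ^ 2)} := by
    intro A
    refine ⟨Real.sqrt (∑ i, ∑ j, A i j ^ 2), ?_⟩
    rintro r ⟨x, hx, rfl⟩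
    apply Real.sqrt_le_sqrt
    apply Finset.sum_le_sum
    intro i _
    have cs := Finset.sum_mul_sq_le_sq_mul_sq Finset.univ (fun j => A i j) x
    simp only [hx, mul_one] at cs
    simpa [Matrix.mulVec, dotProduct] using cs
  constructor
  · -- operator norm
    have h1 : sigma1 (T - dnf T) ≤ c := by
      apply csSup_le
      · exact ⟨Real.sqrt (∑ i, ((T - dnf T).mulVec (fun j => if j = ⟨0, hn⟩ then 1 else 0) i) ^ 2),
          fun j => if j = ⟨0, hn⟩ then 1 else 0, by simp [Finset.sum_ite_eq'], rfl⟩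
      · rintro r ⟨x, hx, rfl⟩
        apply Real.sqrt_le_sqrt
        have hmv : ∀ i, (T - dnf T).mulVec x i = -(d i / n) * ∑ j, x j := by
          intro i
          simp only [Matrix.mulVec, dotProduct, hA, Finset.mul_sum]
        have hs2 : (∑ j, x j) ^ 2 ≤ n := by
          have cs := Finset.sum_mul_sq_le_sq_mul_sq Finset.univ (fun _ => (1:ℝ)) x
          simp only [one_mul, one_pow, hx, Finset.sum_const, Finset.card_univ,
            Fintype.card_fin, nsmul_eq_mul, mul_one] at cs
          exact cs
        calc ∑ i, ((T - dnf T).mulVec x i) ^ 2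
            = (∑ i, d i ^ 2) * ((∑ j, x j) ^ 2 / n ^ 2) := by
              simp only [hmv]
              rw [Finset.sum_mul]
              apply Finset.sum_congr rfl
              intro i _
              field_simp
          _ ≤ (∑ i, d i ^ 2) * (n / n ^ 2) := by
              apply mul_le_mul_of_nonneg_left
              · exact div_le_div_of_nonneg_right hs2 (by positivity)
              · positivity
          _ = (∑ i, d i ^ 2) / n := by field_simp
    have h2 : c ≤ sigma1 (T - S) := by
      apply le_csSup (bdd _)
      refine ⟨fun _ => (Real.sqrt n)⁻¹, ?_, ?_⟩
      · rw [Finset.sum_const, Finset.card_univ, Fintype.card_fin, nsmul_eq_mul]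
        rw [inv_pow, Real.sq_sqrt hn'.le]
        field_simp
      · have hmv : ∀ i, (T - S).mulVec (fun _ => (Real.sqrt n)⁻¹) i
            = -(d i) * (Real.sqrt n)⁻¹ := by
          intro i
          simp only [Matrix.mulVec, dotProduct, ← Finset.sum_mul, hB i]
        have key : ∑ i, ((T - S).mulVec (fun _ => (Real.sqrt n)⁻¹) i) ^ 2
            = (∑ i, d i ^ 2) / n := by
          simp only [hmv, mul_pow, neg_sq, inv_pow, Real.sq_sqrt hn'.le]
          rw [← Finset.sum_mul]
          field_simp
        rw [hc, key]
    linarith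
  · apply Real.sqrt_le_sqrt
    rw [hFrobL, Finset.sum_div]
    exact Finset.sum_le_sum fun i _ => hFrobR i
end

section
/- Let T be an n×n sub-stochastic matrix with row sums r₁,…,r_n. Then (T − dnf(T))(T − dnf(T))^⊤ = (1/n)(𝟏 − T𝟏)(𝟏 − T𝟏)^⊤, and consequently ‖T − dnf(T)‖₂² = ‖T − dnf(T)‖_F² = (1/n)·Σᵢ(1 − rᵢ)². -/
open Matrix BigOperators

/-- For a sub-stochastic matrix `T` with row sums `rᵢ`,
`(T - dnf T)(T - dnf T)ᵀ = (1/n)(𝟏 - T𝟏)(𝟏 - T𝟏)ᵀ`, and consequently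
`‖T - dnf T‖₂² = ‖T - dnf T‖_F² = (1/n) ∑ᵢ (1 - rᵢ)²`. -/
theorem stmt14 {n : ℕ} (hn : 0 < n) (T : Matrix (Fin n) (Fin n) ℝ)
    (hTpos : ∀ i j, 0 ≤ T i j) (hTrow : ∀ i, ∑ j, T i j ≤ 1) :
    (T - dnf T) * (T - dnf T)ᵀ =
      Matrix.of (fun i j => (n : ℝ)⁻¹ * ((1 - ∑ k, T i k) * (1 - ∑ k, T j k))) ∧
    sigma1 (T - dnf T) ^ 2 = (n : ℝ)⁻¹ * ∑ i, (1 - ∑ k, T i k) ^ 2 ∧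
    (∑ i, ∑ j, (T - dnf T) i j ^ 2) = (n : ℝ)⁻¹ * ∑ i, (1 - ∑ k, T i k) ^ 2 := by
  have hn' : (n : ℝ) ≠ 0 := Nat.cast_ne_zero.mpr hn.ne'
  have hnpos : (0:ℝ) < n := Nat.cast_pos.mpr hn
  set a : Fin n → ℝ := fun i => (n : ℝ)⁻¹ * ((∑ k, T i k) - 1) with ha
  have hD : ∀ i j, (T - dnf T) i j = a i := by
    intro i j
    simp [dnf, Matrix.sub_apply, Matrix.add_apply, Matrix.smul_apply, Matrix.mul_apply,
      Fintype.card_fin, ha]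
    ring
  have key : ∀ i, (1 - ∑ k, T i k) ^ 2 = ((∑ k, T i k) - 1) ^ 2 := by
    intro i; ring
  refine ⟨?_, ?_, ?_⟩
  · ext i j
    simp only [Matrix.mul_apply, Matrix.transpose_apply, Matrix.of_apply, hD]
    rw [Finset.sum_const, Finset.card_univ, Fintype.card_fin, nsmul_eq_mul, ha]
    field_simp
    ring
  · -- operator norm part
    set A : ℝ := ∑ i, a i ^ 2 with hA
    have hA0 : 0 ≤ A := Finset.sum_nonneg fun i _ => sq_nonneg _
    have hnA0 : 0 ≤ (n:ℝ) * A := mul_nonneg hnpos.le hA0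
    set M : ℝ := Real.sqrt ((n:ℝ) * A) with hM
    have hmv : ∀ x : Fin n → ℝ, ∀ i, (T - dnf T).mulVec x i = a i * ∑ j, x j := by
      intro x i
      simp only [Matrix.mulVec, dotProduct, hD]
      rw [Finset.mul_sum]
    have hsq : ∀ x : Fin n → ℝ,
        (∑ i, ((T - dnf T).mulVec x i) ^ 2) = (∑ j, x j) ^ 2 * A := by
      intro x
      simp only [hmv, hA]
      rw [Finset.mul_sum]
      exact Finset.sum_congr rfl fun i _ => by ring
    have hub : ∀ r ∈ {r : ℝ | ∃ x : Fin n → ℝ, ∑ i, x i ^ 2 = 1 ∧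
        r = Real.sqrt (∑ i, ((T - dnf T).mulVec x i) ^ 2)}, r ≤ M := by
      rintro r ⟨x, hx, rfl⟩
      apply Real.sqrt_le_sqrt
      rw [hsq x]
      have hcs : (∑ j, x j) ^ 2 ≤ (n:ℝ) := by
        have := Finset.sum_mul_sq_le_sq_mul_sq Finset.univ x (fun _ => (1:ℝ))
        simpa [hx, Finset.card_univ] using this
      exact mul_le_mul_of_nonneg_right hcs hA0
    have hs0 : Real.sqrt n ≠ 0 := (Real.sqrt_pos.mpr hnpos).ne'
    have hS : (∑ _j : Fin n, (Real.sqrt n)⁻¹) = Real.sqrt n := by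
      rw [Finset.sum_const, Finset.card_univ, Fintype.card_fin, nsmul_eq_mul]
      field_simp
      rw [Real.sq_sqrt hnpos.le]
    have hMmem : M ∈ {r : ℝ | ∃ x : Fin n → ℝ, ∑ i, x i ^ 2 = 1 ∧
        r = Real.sqrt (∑ i, ((T - dnf T).mulVec x i) ^ 2)} := by
      refine ⟨fun _ => (Real.sqrt n)⁻¹, ?_, ?_⟩
      · rw [Finset.sum_const, Finset.card_univ, Fintype.card_fin, nsmul_eq_mul,
          inv_pow, Real.sq_sqrt hnpos.le]
        field_simp
      · rw [hM, hsq, hS, Real.sq_sqrt hnpos.le]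
    have hsS : sigma1 (T - dnf T) = M := by
      apply le_antisymm
      · exact csSup_le ⟨M, hMmem⟩ hub
      · exact le_csSup ⟨M, hub⟩ hMmem
    rw [hsS, hM, Real.sq_sqrt hnA0, hA, ha]
    rw [Finset.mul_sum, Finset.mul_sum]
    refine Finset.sum_congr rfl fun i _ => ?_
    rw [key i]
    field_simp
  · simp only [hD]
    rw [Finset.mul_sum]
    refine Finset.sum_congr rfl fun i _ => ?_
    rw [Finset.sum_const, Finset.card_univ, Fintype.card_fin, nsmul_eq_mul, key i, ha]
    field_simp
end

section
/- Let T₀ and T be n×n stochastic matrices, S a subset of indices such that the principal submatrix T₀[S] is also stochastic, and let T̃ = dnf(T[S]). Then ‖T̃ − T₀[S]‖₂ ≤ ‖T − T₀‖₂. -/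
open Matrix BigOperators

lemma sigma1_bddAbove {ι : Type*} [Fintype ι] (A : Matrix ι ι ℝ) :
    BddAbove {r : ℝ | ∃ x : ι → ℝ, ∑ i, x i ^ 2 = 1 ∧
      r = Real.sqrt (∑ i, (A.mulVec x i) ^ 2)} := by
  refine ⟨Real.sqrt (∑ i, ∑ j, A i j ^ 2), ?_⟩
  rintro r ⟨x, hx, rfl⟩
  apply Real.sqrt_le_sqrt
  apply Finset.sum_le_sum
  intro i _
  calc (A.mulVec x i) ^ 2 = (∑ j, A i j * x j) ^ 2 := by rfl
    _ ≤ (∑ j, A i j ^ 2) * ∑ j, x j ^ 2 := Finset.sum_mul_sq_le_sq_mul_sq _ _ _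
    _ = ∑ j, A i j ^ 2 := by rw [hx, mul_one]

lemma sigma1_nonneg {ι : Type*} [Fintype ι] [DecidableEq ι] [Nonempty ι] (A : Matrix ι ι ℝ) :
    0 ≤ sigma1 A := by
  obtain ⟨i₀⟩ := ‹Nonempty ι›
  set x : ι → ℝ := fun j => if j = i₀ then 1 else 0 with hxdef
  have hx : ∑ i, x i ^ 2 = 1 := by simp [hxdef]
  have hmem : Real.sqrt (∑ i, (A.mulVec x i) ^ 2) ∈
      {r : ℝ | ∃ x : ι → ℝ, ∑ i, x i ^ 2 = 1 ∧
        r = Real.sqrt (∑ i, (A.mulVec x i) ^ 2)} := ⟨x, hx, rfl⟩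
  exact le_trans (Real.sqrt_nonneg _) (le_csSup (sigma1_bddAbove A) hmem)

lemma sigma1_apply_le {ι : Type*} [Fintype ι] [DecidableEq ι] [Nonempty ι] (A : Matrix ι ι ℝ)
    (v : ι → ℝ) (hv : ∑ i, v i ^ 2 ≤ 1) :
    Real.sqrt (∑ i, (A.mulVec v i) ^ 2) ≤ sigma1 A := by
  set t := ∑ i, v i ^ 2 with ht
  have htnn : 0 ≤ t := Finset.sum_nonneg fun i _ => sq_nonneg _
  rcases eq_or_lt_of_le htnn with h0 | hpos
  · -- t = 0, so v = 0
    have hv0 : ∀ i, v i = 0 := by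
      intro i
      have := (Finset.sum_eq_zero_iff_of_nonneg (fun i _ => sq_nonneg (v i))).1 h0.symm i
        (Finset.mem_univ i)
      exact pow_eq_zero_iff (n := 2) (by norm_num) |>.1 this
    have : v = 0 := funext hv0
    rw [this]
    simp [Matrix.mulVec_zero]
    exact sigma1_nonneg A
  · set c := Real.sqrt t with hc
    have hcpos : 0 < c := Real.sqrt_pos.2 hpos
    set z : ι → ℝ := c⁻¹ • v with hz
    have hz1 : ∑ i, z i ^ 2 = 1 := by
      simp only [hz, Pi.smul_apply, smul_eq_mul, mul_pow, ← Finset.mul_sum, ← ht]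
      rw [← hc] at *
      rw [show c⁻¹ ^ 2 * t = t / c ^ 2 by ring, Real.sq_sqrt htnn, div_self (ne_of_gt hpos)]
    have hmv : A.mulVec v = c • A.mulVec z := by
      rw [hz, Matrix.mulVec_smul, smul_smul, mul_inv_cancel₀ (ne_of_gt hcpos), one_smul]
    have key : ∑ i, (A.mulVec v i) ^ 2 = c ^ 2 * ∑ i, (A.mulVec z i) ^ 2 := by
      rw [hmv]; simp [mul_pow, Finset.mul_sum]
    rw [key, Real.sqrt_mul (sq_nonneg c), Real.sqrt_sq hcpos.le]
    have hzle : Real.sqrt (∑ i, (A.mulVec z i) ^ 2) ≤ sigma1 A :=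
      le_csSup (sigma1_bddAbove A) ⟨z, hz1, rfl⟩
    have hc1 : c ≤ 1 := by
      rw [hc]
      calc Real.sqrt t ≤ Real.sqrt 1 := Real.sqrt_le_sqrt hv
        _ = 1 := Real.sqrt_one
    calc c * Real.sqrt (∑ i, (A.mulVec z i) ^ 2)
        ≤ 1 * sigma1 A := by
          apply mul_le_mul hc1 hzle (Real.sqrt_nonneg _) zero_le_one
      _ = sigma1 A := one_mul _

/-- If `T₀, T` are stochastic, `S` a set of indices with `T₀[S]` stochastic, and
`T̃ = dnf(T[S])`, then `‖T̃ - T₀[S]‖₂ ≤ ‖T - T₀‖₂`. -/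
theorem stmt15 {n : ℕ} (T₀ T : Matrix (Fin n) (Fin n) ℝ)
    (hT₀pos : ∀ i j, 0 ≤ T₀ i j) (hT₀row : ∀ i, ∑ j, T₀ i j = 1)
    (hTpos : ∀ i j, 0 ≤ T i j) (hTrow : ∀ i, ∑ j, T i j = 1)
    (S : Finset (Fin n)) (hS : S.Nonempty)
    (hT₀S : ∀ i ∈ S, ∑ j ∈ S, T₀ i j = 1) :
    sigma1
        (dnf (T.submatrix (fun i : {x // x ∈ S} => (i : Fin n))
            (fun j : {x // x ∈ S} => (j : Fin n))) -
          T₀.submatrix (fun i : {x // x ∈ S} => (i : Fin n))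
            (fun j : {x // x ∈ S} => (j : Fin n)))
      ≤ sigma1 (T - T₀) := by
  haveI hne : Nonempty (Fin n) := ⟨hS.choose⟩
  haveI hne' : Nonempty {x // x ∈ S} := ⟨⟨hS.choose, hS.choose_spec⟩⟩
  set E : Matrix (Fin n) (Fin n) ℝ := T - T₀ with hE
  set D : Matrix {x // x ∈ S} {x // x ∈ S} ℝ :=
    dnf (T.submatrix (fun i : {x // x ∈ S} => (i : Fin n))
            (fun j : {x // x ∈ S} => (j : Fin n))) -
          T₀.submatrix (fun i : {x // x ∈ S} => (i : Fin n))
            (fun j : {x // x ∈ S} => (j : Fin n)) with hDdef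
  set s : ℝ := (S.card : ℝ) with hsdef
  have hs : 0 < s := by rw [hsdef]; exact_mod_cast hS.card_pos
  have hcard : ((Fintype.card {x // x ∈ S} : ℝ)) = s := by
    rw [Fintype.card_coe]
  refine Real.sSup_le ?_ (sigma1_nonneg E)
  rintro r ⟨x, hx, rfl⟩
  set m : ℝ := s⁻¹ * ∑ i, x i with hm
  set w : Fin n → ℝ := fun j => if h : j ∈ S then x ⟨j, h⟩ - m else 0 with hw
  -- entrywise formula for D
  have hD : ∀ (p q : {x // x ∈ S}), D p q =
      E ↑p ↑q - s⁻¹ * ∑ k : {x // x ∈ S}, E ↑p ↑k := by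
    intro p q
    have h1 : ∑ k : {x // x ∈ S}, T₀ ↑p ↑k = 1 := by
      rw [Finset.sum_coe_sort S (fun j => T₀ ↑p j)]
      exact hT₀S ↑p p.2
    simp only [hDdef, dnf, hE, Matrix.sub_apply, Matrix.add_apply, Matrix.smul_apply,
      Matrix.mul_apply, Matrix.of_apply, Matrix.submatrix_apply, smul_eq_mul, mul_one,
      Finset.sum_sub_distrib]
    rw [hcard, h1]
    ring
  -- mulVec formula
  have key : ∀ p : {x // x ∈ S}, D.mulVec x p = E.mulVec w ↑p := by
    intro p
    have hrhs : E.mulVec w ↑p = ∑ q : {x // x ∈ S}, E ↑p ↑q * (x q - m) := by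
      have e1 : E.mulVec w ↑p = ∑ j : Fin n, E ↑p j * w j := rfl
      have e2 : ∑ j : Fin n, E ↑p j * w j = ∑ j ∈ S, E ↑p j * w j := by
        refine (Finset.sum_subset S.subset_univ ?_).symm
        intro j _ hj
        simp [hw, dif_neg hj]
      have e3 : ∑ j ∈ S, E ↑p j * w j = ∑ q : {x // x ∈ S}, E ↑p ↑q * w ↑q :=
        (Finset.sum_coe_sort S (fun j => E ↑p j * w j)).symm
      rw [e1, e2, e3]
      refine Finset.sum_congr rfl fun q _ => ?_
      rw [hw]
      simp [dif_pos q.2]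
    have hlhs : D.mulVec x p = ∑ q : {x // x ∈ S}, D p q * x q := rfl
    rw [hlhs, hrhs]
    simp_rw [hD p, sub_mul, mul_sub, Finset.sum_sub_distrib]
    rw [← Finset.mul_sum, ← Finset.sum_mul, hm]
    ring
  -- sum of squares comparison
  have hsum1 : ∑ p : {x // x ∈ S}, (D.mulVec x p) ^ 2 = ∑ p ∈ S, (E.mulVec w p) ^ 2 := by
    rw [← Finset.sum_coe_sort S (fun p => (E.mulVec w p) ^ 2)]
    exact Finset.sum_congr rfl fun p _ => by rw [key p]
  have hsum2 : ∑ p ∈ S, (E.mulVec w p) ^ 2 ≤ ∑ i, (E.mulVec w i) ^ 2 :=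
    Finset.sum_le_sum_of_subset_of_nonneg S.subset_univ (fun i _ _ => sq_nonneg _)
  -- w is subunit
  have hw1 : ∑ i, w i ^ 2 ≤ 1 := by
    have e2 : ∑ i : Fin n, w i ^ 2 = ∑ j ∈ S, w j ^ 2 := by
      refine (Finset.sum_subset S.subset_univ ?_).symm
      intro j _ hj
      simp [hw, dif_neg hj]
    have e3 : ∑ j ∈ S, w j ^ 2 = ∑ q : {x // x ∈ S}, (x q - m) ^ 2 := by
      rw [← Finset.sum_coe_sort S (fun j => w j ^ 2)]
      refine Finset.sum_congr rfl fun q _ => ?_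
      rw [hw]
      simp [dif_pos q.2]
    have e4 : ∑ q : {x // x ∈ S}, (x q - m) ^ 2
        = (∑ q, x q ^ 2) - 2 * m * (∑ q, x q) + s * m ^ 2 := by
      simp_rw [sub_sq, Finset.sum_add_distrib, Finset.sum_sub_distrib, Finset.sum_const,
        Finset.card_univ, Fintype.card_coe, ← Finset.sum_mul, nsmul_eq_mul]
      rw [← hsdef,
        show (∑ q : {x // x ∈ S}, 2 * x q) = 2 * ∑ q : {x // x ∈ S}, x q from
          (Finset.mul_sum _ _ _).symm]
      ring
    have hXm : ∑ q, x q = s * m := by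
      rw [hm]
      field_simp
    rw [e2, e3, e4, hx, hXm]
    nlinarith [sq_nonneg m, hs]
  calc Real.sqrt (∑ p : {x // x ∈ S}, (D.mulVec x p) ^ 2)
      ≤ Real.sqrt (∑ i, (E.mulVec w i) ^ 2) := by
        apply Real.sqrt_le_sqrt
        rw [hsum1]; exact hsum2
    _ ≤ sigma1 E := sigma1_apply_le E w hw1
end

section
/- Let T₀ and T be n×n stochastic matrices, S a set of indices with T₀[S] stochastic, and T̃ = dnf(T[S]). Then ‖T̃ − T₀[S]‖_F ≤ ‖T − T₀‖_F and ‖T̃ − T₀[S]‖_∞ ≤ ‖T − T₀‖_∞. -/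
open Matrix BigOperators

/-- The Frobenius norm of a real matrix. -/
noncomputable def frobNorm {ι : Type*} [Fintype ι] (A : Matrix ι ι ℝ) : ℝ :=
  Real.sqrt (∑ i, ∑ j, A i j ^ 2)

lemma aux_sq {n : ℕ} (S : Finset (Fin n)) (hS : S.Nonempty) (f : Fin n → ℝ) :
    ∑ j ∈ S, (f j - (S.card : ℝ)⁻¹ * ∑ k ∈ S, f k) ^ 2 ≤ ∑ j ∈ S, f j ^ 2 := by
  have hm : (0:ℝ) < S.card := by exact_mod_cast hS.card_pos
  set s := ∑ k ∈ S, f k with hs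
  set c : ℝ := (S.card : ℝ)⁻¹ * s with hc
  have hcs : c * S.card = s := by
    rw [hc]; field_simp
  have hexp : ∑ j ∈ S, (f j - c) ^ 2
      = ∑ j ∈ S, f j ^ 2 - 2 * c * s + S.card * c ^ 2 := by
    have : ∀ j ∈ S, (f j - c) ^ 2 = f j ^ 2 - 2 * c * f j + c ^ 2 := by
      intro j _; ring
    rw [Finset.sum_congr rfl this, Finset.sum_add_distrib, Finset.sum_sub_distrib,
      ← Finset.mul_sum, Finset.sum_const, nsmul_eq_mul, ← hs]
  rw [hexp]
  have h2 : 2 * c * s = 2 * ((S.card : ℝ) * c ^ 2) := by rw [← hcs]; ring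
  have h3 : 0 ≤ (S.card : ℝ) * c ^ 2 := mul_nonneg hm.le (sq_nonneg c)
  linarith

lemma aux_abs {n : ℕ} (S : Finset (Fin n)) (hS : S.Nonempty) (f : Fin n → ℝ)
    (hzero : ∑ j, f j = 0) :
    ∑ j ∈ S, |f j - (S.card : ℝ)⁻¹ * ∑ k ∈ S, f k| ≤ ∑ j, |f j| := by
  classical
  have hm : (0:ℝ) < S.card := by exact_mod_cast hS.card_pos
  set s := ∑ k ∈ S, f k with hs
  set c : ℝ := (S.card : ℝ)⁻¹ * s with hc
  have h1 : ∑ j ∈ S, |f j - c| ≤ ∑ j ∈ S, |f j| + S.card * |c| := by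
    calc ∑ j ∈ S, |f j - c| ≤ ∑ j ∈ S, (|f j| + |c|) :=
          Finset.sum_le_sum (fun j _ => by
            rw [sub_eq_add_neg]
            exact le_of_le_of_eq (abs_add_le _ _) (by rw [abs_neg]))
      _ = ∑ j ∈ S, |f j| + S.card * |c| := by
          rw [Finset.sum_add_distrib, Finset.sum_const, nsmul_eq_mul]
  have hcabs : (S.card : ℝ) * |c| = |s| := by
    rw [hc, abs_mul, abs_of_nonneg (inv_nonneg.mpr hm.le)]
    field_simp
  have hsplit : s + ∑ j ∈ Sᶜ, f j = 0 := by
    rw [hs, Finset.sum_add_sum_compl]; exact hzero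
  have h2 : |s| ≤ ∑ j ∈ Sᶜ, |f j| := by
    have : s = -∑ j ∈ Sᶜ, f j := by linarith
    rw [this, abs_neg]
    exact Finset.abs_sum_le_sum_abs _ _
  have h3 : ∑ j ∈ S, |f j| + ∑ j ∈ Sᶜ, |f j| = ∑ j, |f j| :=
    Finset.sum_add_sum_compl S _
  calc ∑ j ∈ S, |f j - c| ≤ ∑ j ∈ S, |f j| + S.card * |c| := h1
    _ = ∑ j ∈ S, |f j| + |s| := by rw [hcabs]
    _ ≤ ∑ j ∈ S, |f j| + ∑ j ∈ Sᶜ, |f j| := by linarith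
    _ = ∑ j, |f j| := h3

/-- If `T₀, T` are stochastic, `S` a set of indices with `T₀[S]` stochastic, and
`T̃ = dnf(T[S])`, then `‖T̃ - T₀[S]‖_F ≤ ‖T - T₀‖_F` and `‖T̃ - T₀[S]‖_∞ ≤ ‖T - T₀‖_∞`. -/
theorem stmt16 {n : ℕ} (T₀ T : Matrix (Fin n) (Fin n) ℝ)
    (hT₀pos : ∀ i j, 0 ≤ T₀ i j) (hT₀row : ∀ i, ∑ j, T₀ i j = 1)
    (hTpos : ∀ i j, 0 ≤ T i j) (hTrow : ∀ i, ∑ j, T i j = 1)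
    (S : Finset (Fin n)) (hS : S.Nonempty)
    (hT₀S : ∀ i ∈ S, ∑ j ∈ S, T₀ i j = 1) :
    frobNorm
        (dnf (T.submatrix (fun i : {x // x ∈ S} => (i : Fin n))
            (fun j : {x // x ∈ S} => (j : Fin n))) -
          T₀.submatrix (fun i : {x // x ∈ S} => (i : Fin n))
            (fun j : {x // x ∈ S} => (j : Fin n)))
      ≤ frobNorm (T - T₀) ∧
    infNorm
        (dnf (T.submatrix (fun i : {x // x ∈ S} => (i : Fin n))
            (fun j : {x // x ∈ S} => (j : Fin n))) -
          T₀.submatrix (fun i : {x // x ∈ S} => (i : Fin n))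
            (fun j : {x // x ∈ S} => (j : Fin n)))
      ≤ infNorm (T - T₀) := by
  classical
  have hErow : ∀ i, ∑ j, (T - T₀) i j = 0 := by
    intro i
    simp [Matrix.sub_apply, Finset.sum_sub_distrib, hTrow, hT₀row]
  have hcard : (Fintype.card {x // x ∈ S} : ℝ) = (S.card : ℝ) := by
    simp [Fintype.card_coe]
  -- entrywise formula
  have hD : ∀ (i j : {x // x ∈ S}),
      (dnf (T.submatrix (fun i : {x // x ∈ S} => (i : Fin n))
            (fun j : {x // x ∈ S} => (j : Fin n))) -
          T₀.submatrix (fun i : {x // x ∈ S} => (i : Fin n))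
            (fun j : {x // x ∈ S} => (j : Fin n))) i j
      = (T - T₀) (i : Fin n) (j : Fin n)
        - (S.card : ℝ)⁻¹ * ∑ k ∈ S, (T - T₀) (i : Fin n) k := by
    intro i j
    have hsum : ∑ k : {x // x ∈ S}, T (i : Fin n) (k : Fin n) = ∑ k ∈ S, T (i : Fin n) k :=
      Finset.sum_coe_sort S (fun k => T (i : Fin n) k)
    simp only [dnf, Matrix.sub_apply, Matrix.add_apply, Matrix.smul_apply,
      Matrix.mul_apply, Matrix.submatrix_apply, Matrix.of_apply, smul_eq_mul, mul_one]
    rw [hsum, hcard]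
    have h1 : (1 : ℝ) - ∑ k ∈ S, T (i : Fin n) k
        = -∑ k ∈ S, (T - T₀) (i : Fin n) k := by
      rw [← hT₀S (i : Fin n) i.2]
      simp [Matrix.sub_apply, Finset.sum_sub_distrib]
    rw [h1]
    simp [Matrix.sub_apply]
    ring
  have hNE : Nonempty {x // x ∈ S} := ⟨⟨hS.choose, hS.choose_spec⟩⟩
  constructor
  · -- Frobenius
    simp only [frobNorm]
    apply Real.sqrt_le_sqrt
    have step1 : ∀ i : {x // x ∈ S},
        ∑ j : {x // x ∈ S},
          ((dnf (T.submatrix (fun i : {x // x ∈ S} => (i : Fin n))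
            (fun j : {x // x ∈ S} => (j : Fin n))) -
          T₀.submatrix (fun i : {x // x ∈ S} => (i : Fin n))
            (fun j : {x // x ∈ S} => (j : Fin n))) i j) ^ 2
        ≤ ∑ j, (T - T₀) (i : Fin n) j ^ 2 := by
      intro i
      have e1 : ∑ j : {x // x ∈ S},
          ((dnf (T.submatrix (fun i : {x // x ∈ S} => (i : Fin n))
            (fun j : {x // x ∈ S} => (j : Fin n))) -
          T₀.submatrix (fun i : {x // x ∈ S} => (i : Fin n))
            (fun j : {x // x ∈ S} => (j : Fin n))) i j) ^ 2
          = ∑ j ∈ S, ((T - T₀) (i : Fin n) j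
              - (S.card : ℝ)⁻¹ * ∑ k ∈ S, (T - T₀) (i : Fin n) k) ^ 2 := by
        rw [← Finset.sum_coe_sort S]
        exact Finset.sum_congr rfl (fun j _ => by rw [hD i j])
      rw [e1]
      calc _ ≤ ∑ j ∈ S, (T - T₀) (i : Fin n) j ^ 2 :=
            aux_sq S hS (fun j => (T - T₀) (i : Fin n) j)
        _ ≤ ∑ j, (T - T₀) (i : Fin n) j ^ 2 :=
            Finset.sum_le_sum_of_subset_of_nonneg (Finset.subset_univ S)
              (fun j _ _ => sq_nonneg _)
    calc ∑ i : {x // x ∈ S}, ∑ j : {x // x ∈ S}, _ ^ 2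
        ≤ ∑ i : {x // x ∈ S}, ∑ j, (T - T₀) (i : Fin n) j ^ 2 :=
          Finset.sum_le_sum (fun i _ => step1 i)
      _ = ∑ i ∈ S, ∑ j, (T - T₀) i j ^ 2 :=
          Finset.sum_coe_sort S (fun i => ∑ j, (T - T₀) i j ^ 2)
      _ ≤ ∑ i, ∑ j, (T - T₀) i j ^ 2 :=
          Finset.sum_le_sum_of_subset_of_nonneg (Finset.subset_univ S)
            (fun i _ _ => Finset.sum_nonneg fun j _ => sq_nonneg _)
  · -- inf norm
    simp only [infNorm]
    apply ciSup_le
    intro i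
    have e1 : ∑ j : {x // x ∈ S},
        |(dnf (T.submatrix (fun i : {x // x ∈ S} => (i : Fin n))
            (fun j : {x // x ∈ S} => (j : Fin n))) -
          T₀.submatrix (fun i : {x // x ∈ S} => (i : Fin n))
            (fun j : {x // x ∈ S} => (j : Fin n))) i j|
        = ∑ j ∈ S, |(T - T₀) (i : Fin n) j
            - (S.card : ℝ)⁻¹ * ∑ k ∈ S, (T - T₀) (i : Fin n) k| := by
      rw [← Finset.sum_coe_sort S]
      exact Finset.sum_congr rfl (fun j _ => by rw [hD i j])
    rw [e1]
    have h2 : ∑ j ∈ S, |(T - T₀) (i : Fin n) j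
        - (S.card : ℝ)⁻¹ * ∑ k ∈ S, (T - T₀) (i : Fin n) k|
        ≤ ∑ j, |(T - T₀) (i : Fin n) j| :=
      aux_abs S hS (fun j => (T - T₀) (i : Fin n) j) (hErow (i : Fin n))
    refine h2.trans ?_
    exact le_ciSup (f := fun i' : Fin n => ∑ j, |(T - T₀) i' j|)
      (Set.Finite.bddAbove (Set.finite_range _)) (i : Fin n)
end

section
/- Iterated dangling node fixes on nested principal submatrices agree with a single dangling node fix: let T be a stochastic matrix partitioned with diagonal blocks of sizes k, ℓ, m. Let S = dnf of the leading (k+ℓ)×(k+ℓ) principal submatrix of T, and then apply dnf to the leading k×k principal submatrix of S. The result equals dnf applied directly to the leading k×k principal submatrix of T, namely T₁₁ + (1/k)(T₁₂𝟏 + T₁₃𝟏)𝟏^⊤. -/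
open Matrix BigOperators

lemma dnf_apply {ι : Type*} [Fintype ι] (A : Matrix ι ι ℝ) (i j : ι) :
    dnf A i j = A i j + (Fintype.card ι : ℝ)⁻¹ * (1 - ∑ j', A i j') := by
  simp [dnf, Matrix.mul_apply, Matrix.add_apply, Matrix.sub_apply, Matrix.smul_apply]

lemma sum_head {k n : ℕ} (h : k ≤ n) (f : Fin n → ℝ) :
    ∑ j ∈ Finset.univ.filter (fun j : Fin n => ¬ k ≤ (j : ℕ)), f j
      = ∑ j : Fin k, f (Fin.castLE h j) := by
  rw [show (fun j : Fin k => f (Fin.castLE h j))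
      = fun j => f ((Fin.castLEEmb h) j) from rfl, ← Finset.sum_map Finset.univ _ f]
  congr 1
  ext j
  simp only [Finset.mem_filter, Finset.mem_univ, true_and, Finset.mem_map,
    Fin.castLEEmb_apply, not_le]
  constructor
  · intro hj; exact ⟨⟨j, hj⟩, by ext; simp⟩
  · rintro ⟨x, rfl⟩; simp

/-- Iterated dangling node fixes on nested leading principal submatrices agree with a
single dangling node fix: for a stochastic `T` with diagonal blocks of sizes `k, ℓ, m`,
applying `dnf` to the leading `(k+ℓ)×(k+ℓ)` submatrix and then `dnf` to the leading
`k×k` submatrix of the result equals `dnf` of the leading `k×k` submatrix of `T`,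
namely `T₁₁ + (1/k)(T₁₂𝟏 + T₁₃𝟏)𝟏ᵀ`. -/
theorem stmt17 {k l m : ℕ} (hk : 0 < k)
    (T : Matrix (Fin (k + l + m)) (Fin (k + l + m)) ℝ)
    (hTpos : ∀ i j, 0 ≤ T i j) (hTrow : ∀ i, ∑ j, T i j = 1) :
    dnf ((dnf (T.submatrix (Fin.castLE (Nat.le_add_right (k + l) m))
            (Fin.castLE (Nat.le_add_right (k + l) m)))).submatrix
          (Fin.castLE (Nat.le_add_right k l)) (Fin.castLE (Nat.le_add_right k l))) =
        dnf (T.submatrix (Fin.castLE ((Nat.le_add_right k l).trans (Nat.le_add_right (k + l) m)))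
          (Fin.castLE ((Nat.le_add_right k l).trans (Nat.le_add_right (k + l) m)))) ∧
      dnf (T.submatrix (Fin.castLE ((Nat.le_add_right k l).trans (Nat.le_add_right (k + l) m)))
          (Fin.castLE ((Nat.le_add_right k l).trans (Nat.le_add_right (k + l) m)))) =
        Matrix.of (fun i _j : Fin k =>
          T (Fin.castLE ((Nat.le_add_right k l).trans (Nat.le_add_right (k + l) m)) i)
              (Fin.castLE ((Nat.le_add_right k l).trans (Nat.le_add_right (k + l) m)) _j) +
            (k : ℝ)⁻¹ *
              ∑ j' ∈ Finset.univ.filter (fun j' : Fin (k + l + m) => k ≤ (j' : ℕ)),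
                T (Fin.castLE ((Nat.le_add_right k l).trans (Nat.le_add_right (k + l) m)) i)
                  j') := by
  have hk' : (k : ℝ) ≠ 0 := Nat.cast_ne_zero.mpr hk.ne'
  have hkl' : ((k : ℝ) + l) ≠ 0 := by positivity
  have hbig := (Nat.le_add_right k l).trans (Nat.le_add_right (k + l) m)
  have key : ∀ i : Fin (k + l + m),
      ∑ j' ∈ Finset.univ.filter (fun j' : Fin (k + l + m) => k ≤ (j' : ℕ)), T i j'
        = 1 - ∑ j : Fin k, T i (Fin.castLE hbig j) := by
    intro i
    have h := Finset.sum_filter_add_sum_filter_not Finset.univ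
      (fun j : Fin (k + l + m) => ¬ k ≤ (j : ℕ)) (T i)
    rw [hTrow i, sum_head hbig] at h
    simp only [not_not] at h
    linarith
  constructor
  · ext i j
    simp only [dnf_apply, Matrix.submatrix_apply, Fin.castLE_castLE, Fintype.card_fin,
      Finset.sum_add_distrib, Finset.sum_const, Finset.card_univ, nsmul_eq_mul]
    push_cast
    field_simp
    ring
  · ext i j
    simp only [dnf_apply, Matrix.submatrix_apply, Fintype.card_fin, Matrix.of_apply, key]
end

section
/- Let T be a stochastic matrix partitioned in 2×2 block form with diagonal blocks of sizes k and n−k, and let z = (1/√(nk(n−k)))·[(n−k)𝟏_k; −k𝟏_{n−k}]. Then ‖z‖₂ = 1, z^⊤𝟏 = 0, and ‖(I−T)z‖₂² = (n/(k(n−k)))·(‖T₁₂𝟏‖₂² + ‖T₂₁𝟏‖₂²); consequently, the second smallest singular value σ of I−T satisfies σ² ≤ (n/(k(n−k)))·(‖T₁₂𝟏‖₂² + ‖T₂₁𝟏‖₂²). -/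
open Matrix BigOperators

lemma aux_card_filter_lt (n k : ℕ) (h : k ≤ n) :
    (Finset.univ.filter (fun i : Fin n => (i : ℕ) < k)).card = k := by
  rw [Finset.card_filter]
  rw [Fin.sum_univ_eq_sum_range (fun i => if i < k then 1 else 0)]
  rw [← Finset.card_filter]
  have : (Finset.range n).filter (fun i => i < k) = Finset.range k := by
    ext a; simp; omega
  rw [this, Finset.card_range]

lemma aux_filter_not_lt (n k : ℕ) :
    (Finset.univ.filter (fun i : Fin n => ¬ (i : ℕ) < k)) =
    (Finset.univ.filter (fun i : Fin n => k ≤ (i : ℕ))) := by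
  ext i; simp [not_lt]

lemma aux_card_filter_ge (n k : ℕ) (h : k ≤ n) :
    (Finset.univ.filter (fun i : Fin n => k ≤ (i : ℕ))).card = n - k := by
  rw [← aux_filter_not_lt]
  have h2 := Finset.card_filter_add_card_filter_not
    (s := (Finset.univ : Finset (Fin n))) (p := fun i : Fin n => (i : ℕ) < k)
  rw [aux_card_filter_lt n k h] at h2
  simp only [Finset.card_univ, Fintype.card_fin] at h2
  omega

lemma aux_two_le_length {α : Type*} [DecidableEq α] {l : List α} {i j : α}
    (h : l.Nodup) (hi : i ∈ l) (hj : j ∈ l) (hij : i ≠ j) : 2 ≤ l.length := by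
  rw [← List.toFinset_card_of_nodup h]
  have hsub : ({i, j} : Finset α) ⊆ l.toFinset := by
    intro x hx
    simp only [Finset.mem_insert, Finset.mem_singleton] at hx
    rcases hx with rfl | rfl <;> simpa [List.mem_toFinset]
  calc 2 = ({i, j} : Finset α).card := (Finset.card_pair hij).symm
    _ ≤ _ := Finset.card_le_card hsub

lemma aux_getD_one_mergeSort {L : List ℝ} {b : ℝ} (hlen : 2 ≤ L.length)
    (hnn : ∀ x ∈ L, 0 ≤ x)
    (hcount : 2 ≤ L.countP (fun x => decide (x ≤ b))) :
    0 ≤ (L.mergeSort (fun a b => decide (a ≤ b))).getD 1 0 ∧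
    (L.mergeSort (fun a b => decide (a ≤ b))).getD 1 0 ≤ b := by
  set M := L.mergeSort (fun a b => decide (a ≤ b)) with hM
  have hperm : M.Perm L := List.mergeSort_perm L _
  have hsorted : M.Pairwise (· ≤ ·) := List.pairwise_mergeSort' (· ≤ ·) L
  have hlenM : 2 ≤ M.length := by rw [hperm.length_eq]; exact hlen
  have hcM : 2 ≤ M.countP (fun x => decide (x ≤ b)) := by
    rw [hperm.countP_eq]; exact hcount
  match M, hsorted, hlenM, hcM, hperm with
  | x :: y :: M', hsorted, hlenM, hcM, hperm =>
    have hgetD : (x :: y :: M').getD 1 0 = y := rfl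
    rw [hgetD]
    constructor
    · exact hnn y (hperm.mem_iff.mp (by simp))
    · by_contra hyb
      push_neg at hyb
      have hyM' : ∀ m ∈ M', y ≤ m := by
        have := (List.pairwise_cons.mp ((List.pairwise_cons.mp hsorted).2)).1
        exact this
      have h0 : (y :: M').countP (fun x => decide (x ≤ b)) = 0 := by
        rw [List.countP_eq_zero]
        intro a ha
        simp only [List.mem_cons] at ha
        have : b < a := by
          rcases ha with rfl | ha
          · exact hyb
          · exact lt_of_lt_of_le hyb (hyM' a ha)
        simp [not_le.mpr this]
      rw [List.countP_cons, h0] at hcM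
      split at hcM <;> omega

lemma aux_sum_dotProduct {m : Type*} [Fintype m] {ι : Type*} (s : Finset ι)
    (v : ι → m → ℝ) (w : m → ℝ) :
    (∑ i ∈ s, v i) ⬝ᵥ w = ∑ i ∈ s, v i ⬝ᵥ w := by
  simp only [dotProduct, Finset.sum_apply, Finset.sum_mul]
  exact Finset.sum_comm

lemma aux_dotProduct_sum {m : Type*} [Fintype m] {ι : Type*} (s : Finset ι)
    (w : m → ℝ) (v : ι → m → ℝ) :
    w ⬝ᵥ (∑ i ∈ s, v i) = ∑ i ∈ s, w ⬝ᵥ v i := by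
  simp only [dotProduct, Finset.sum_apply, Finset.mul_sum]
  exact Finset.sum_comm

lemma aux_two_small_eigs {n : ℕ} (A : Matrix (Fin n) (Fin n) ℝ)
    (u z : Fin n → ℝ) (c : ℝ) (hc : 0 ≤ c)
    (huu : 0 < u ⬝ᵥ u) (hzz : z ⬝ᵥ z = 1) (huz : u ⬝ᵥ z = 0)
    (hAu : A.mulVec u = 0)
    (hAz : (A.mulVec z) ⬝ᵥ (A.mulVec z) = c) :
    ∃ i j : Fin n, i ≠ j ∧
      (Matrix.isHermitian_mul_conjTranspose_self A).eigenvalues i ≤ c ∧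
      (Matrix.isHermitian_mul_conjTranspose_self A).eigenvalues j ≤ c := by
  classical
  set hH := Matrix.isHermitian_mul_conjTranspose_self A with hHdef
  set μ := hH.eigenvalues with hμ
  set S := Finset.univ.filter (fun i => μ i ≤ c) with hS
  by_cases hcard : 2 ≤ S.card
  · obtain ⟨i, hi, j, hj, hij⟩ := Finset.one_lt_card.mp hcard
    rw [hS, Finset.mem_filter] at hi hj
    exact ⟨i, j, hij, hi.2, hj.2⟩
  exfalso
  push_neg at hcard
  have hn : 0 < n := by
    rcases Nat.eq_zero_or_pos n with h | h
    · subst h; simp [dotProduct] at huu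
    · exact h
  -- eigenvectors
  set E : Fin n → Fin n → ℝ := fun i => ⇑(hH.eigenvectorBasis i) with hE
  have hme : ∀ i, (A * Aᴴ).mulVec (E i) = μ i • E i := fun i => hH.mulVec_eigenvectorBasis i
  have horth : ∀ i j, E i ⬝ᵥ E j = if i = j then 1 else 0 := by
    intro i j
    have h2 := (orthonormal_iff_ite.mp hH.eigenvectorBasis.orthonormal) i j
    rw [dotProduct_comm]
    simpa [PiLp.inner_apply, RCLike.inner_apply, dotProduct, conj_trivial, hE] using h2
  -- transformed vectors
  set g : Fin n → Fin n → ℝ := fun i => Aᴴ.mulVec (E i) with hg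
  have hAg : ∀ i, A.mulVec (g i) = μ i • E i := by
    intro i
    show A.mulVec (Aᴴ.mulVec (E i)) = μ i • E i
    rw [Matrix.mulVec_mulVec]
    exact hme i
  have hgvm : ∀ i, g i = E i ᵥ* A := by
    intro i
    show Aᴴ.mulVec (E i) = E i ᵥ* A
    rw [conjTranspose_eq_transpose_of_trivial, Matrix.mulVec_transpose]
  have hμpos : ∀ i : {i : Fin n // ¬ μ i ≤ c}, 0 < μ i.1 :=
    fun i => lt_of_le_of_lt hc (not_le.mp i.2)
  set f : {i : Fin n // ¬ μ i ≤ c} → Fin n → ℝ :=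
    fun i => (Real.sqrt (μ i.1))⁻¹ • g i.1 with hf
  have hAf : ∀ i : {i : Fin n // ¬ μ i ≤ c},
      A.mulVec (f i) = Real.sqrt (μ i.1) • E i.1 := by
    intro i
    show A.mulVec ((Real.sqrt (μ i.1))⁻¹ • g i.1) = Real.sqrt (μ i.1) • E i.1
    rw [Matrix.mulVec_smul, hAg, smul_smul]
    congr 1
    have h1 : Real.sqrt (μ i.1) ≠ 0 := ne_of_gt (Real.sqrt_pos.mpr (hμpos i))
    have h2 : Real.sqrt (μ i.1) * Real.sqrt (μ i.1) = μ i.1 :=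
      Real.mul_self_sqrt (hμpos i).le
    rw [inv_mul_eq_div, div_eq_iff h1]
    exact h2.symm
  have hgg : ∀ i j : Fin n, g i ⬝ᵥ g j = μ j * (if i = j then 1 else 0) := by
    intro i j
    calc g i ⬝ᵥ g j = (E i ᵥ* A) ⬝ᵥ g j := by rw [hgvm i]
      _ = E i ⬝ᵥ (A.mulVec (g j)) := (Matrix.dotProduct_mulVec _ _ _).symm
      _ = E i ⬝ᵥ (μ j • E j) := by rw [hAg j]
      _ = μ j * (if i = j then 1 else 0) := by rw [dotProduct_smul, horth]; simp
  have hff : ∀ i j : {i : Fin n // ¬ μ i ≤ c}, f i ⬝ᵥ f j = if i = j then 1 else 0 := by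
    intro i j
    show ((Real.sqrt (μ i.1))⁻¹ • g i.1) ⬝ᵥ ((Real.sqrt (μ j.1))⁻¹ • g j.1) = _
    rw [smul_dotProduct, dotProduct_smul, hgg]
    by_cases h : i = j
    · subst h
      have h2 : Real.sqrt (μ i.1) * Real.sqrt (μ i.1) = μ i.1 :=
        Real.mul_self_sqrt (hμpos i).le
      have h1 : Real.sqrt (μ i.1) ≠ 0 := ne_of_gt (Real.sqrt_pos.mpr (hμpos i))
      have hμne : μ i.1 ≠ 0 := ne_of_gt (hμpos i)
      simp only [eq_self_iff_true, if_true, smul_eq_mul, mul_one]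
      rw [← mul_assoc, ← mul_inv, h2, inv_mul_cancel₀ hμne]
    · have h' : i.1 ≠ j.1 := fun hh => h (Subtype.ext hh)
      simp [if_neg h', if_neg h]
  -- linear independence
  have hlif : LinearIndependent ℝ f := by
    rw [Fintype.linearIndependent_iff]
    intro gc hgc j
    have h0 := congrArg (fun v => v ⬝ᵥ f j) hgc
    simp only [aux_sum_dotProduct, smul_dotProduct, zero_dotProduct,
      hff, smul_eq_mul, mul_ite, mul_one, mul_zero, Finset.sum_ite_eq',
      Finset.mem_univ, if_true] at h0
    exact h0
  have hliW : LinearIndependent ℝ ![u, z] := by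
    rw [Fintype.linearIndependent_iff]
    intro gc hgc
    rw [Fin.sum_univ_two] at hgc
    simp only [Matrix.cons_val_zero, Matrix.cons_val_one, Matrix.head_cons] at hgc
    have h1 := congrArg (fun v => v ⬝ᵥ u) hgc
    have h2 := congrArg (fun v => v ⬝ᵥ z) hgc
    simp only [add_dotProduct, smul_dotProduct, zero_dotProduct,
      smul_eq_mul] at h1 h2
    rw [dotProduct_comm z u] at h1
    rw [huz] at h1 h2
    rw [hzz] at h2
    have hgc0 : gc 0 = 0 := by
      rw [mul_zero, add_zero] at h1
      exact (mul_eq_zero.mp h1).resolve_right (ne_of_gt huu)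
    intro i
    fin_cases i
    · exact hgc0
    · rw [hgc0] at h2; simpa using h2
  -- submodules and dimension count
  set K : Submodule ℝ (Fin n → ℝ) := Submodule.span ℝ (Set.range f) with hK
  set W : Submodule ℝ (Fin n → ℝ) := Submodule.span ℝ (Set.range ![u, z]) with hW
  have hcardι : Fintype.card {i : Fin n // ¬ μ i ≤ c} + S.card = n := by
    have h2 := Finset.card_filter_add_card_filter_not
      (s := (Finset.univ : Finset (Fin n))) (p := fun i : Fin n => μ i ≤ c)
    simp only [Finset.card_univ, Fintype.card_fin] at h2
    rw [Fintype.card_subtype, hS]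
    omega
  have hrkK : Module.finrank ℝ K = Fintype.card {i : Fin n // ¬ μ i ≤ c} :=
    finrank_span_eq_card hlif
  have hrkW : Module.finrank ℝ W = 2 := by
    rw [finrank_span_eq_card hliW]; simp
  have hsum := Submodule.finrank_sup_add_finrank_inf_eq W K
  have hle : Module.finrank ℝ ↥(W ⊔ K) ≤ n := by
    have := Submodule.finrank_le (W ⊔ K)
    rwa [Module.finrank_fintype_fun_eq_card, Fintype.card_fin] at this
  have hpos : 0 < Module.finrank ℝ ↥(W ⊓ K) := by omega
  have hbot : W ⊓ K ≠ ⊥ := by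
    intro h
    rw [h, finrank_bot] at hpos
    omega
  obtain ⟨w, hwmem, hw0⟩ := Submodule.exists_mem_ne_zero_of_ne_bot hbot
  obtain ⟨ab, hab⟩ := (Submodule.mem_span_range_iff_exists_fun ℝ).mp hwmem.1
  obtain ⟨cf, hcf⟩ := (Submodule.mem_span_range_iff_exists_fun ℝ).mp hwmem.2
  rw [Fin.sum_univ_two] at hab
  simp only [Matrix.cons_val_zero, Matrix.cons_val_one, Matrix.head_cons] at hab
  set a := ab 0 with ha
  set b := ab 1 with hb
  -- compute A w two ways
  have hAw : A.mulVec w = b • A.mulVec z := by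
    rw [← hab]
    rw [Matrix.mulVec_add]
    simp [Matrix.mulVec_smul, hAu]
  have h1 : (A.mulVec w) ⬝ᵥ (A.mulVec w) = b ^ 2 * c := by
    rw [hAw, smul_dotProduct, dotProduct_smul, hAz]
    simp only [smul_eq_mul]; ring
  have hAwsum : A.mulVec w = ∑ i, cf i • (Real.sqrt (μ i.1) • E i.1) := by
    rw [← hcf]
    rw [show A.mulVec (∑ i, cf i • f i) = ∑ i, cf i • A.mulVec (f i) by
      rw [← Matrix.mulVecLin_apply, map_sum]
      simp [Matrix.mulVecLin_apply, Matrix.mulVec_smul]]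
    exact Finset.sum_congr rfl fun i _ => by rw [hAf]
  have h2 : (A.mulVec w) ⬝ᵥ (A.mulVec w) = ∑ i, μ i.1 * cf i ^ 2 := by
    rw [hAwsum, aux_sum_dotProduct]
    apply Finset.sum_congr rfl
    intro i _
    rw [aux_dotProduct_sum]
    rw [Finset.sum_eq_single i]
    · have hsq : Real.sqrt (μ i.1) * Real.sqrt (μ i.1) = μ i.1 :=
        Real.mul_self_sqrt (hμpos i).le
      simp only [smul_smul, smul_dotProduct, dotProduct_smul, horth, smul_eq_mul,
        eq_self_iff_true, if_true, mul_one]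
      linear_combination (cf i ^ 2) * hsq
    · intro j _ hji
      have h' : i.1 ≠ j.1 := fun hh => hji.symm (Subtype.ext hh)
      simp [smul_dotProduct, dotProduct_smul, horth, if_neg h']
    · intro h; exact absurd (Finset.mem_univ i) h
  -- norms of w two ways
  have h3 : w ⬝ᵥ w = ∑ i, cf i ^ 2 := by
    rw [← hcf, aux_sum_dotProduct]
    apply Finset.sum_congr rfl
    intro i _
    rw [aux_dotProduct_sum]
    rw [Finset.sum_eq_single i]
    · rw [smul_dotProduct, dotProduct_smul, hff, if_pos rfl]; simp [sq]
    · intro j _ hji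
      rw [smul_dotProduct, dotProduct_smul, hff, if_neg (Ne.symm hji)]
      simp
    · intro h; exact absurd (Finset.mem_univ i) h
  have h4 : w ⬝ᵥ w = a ^ 2 * (u ⬝ᵥ u) + b ^ 2 := by
    rw [← hab]
    simp only [add_dotProduct, dotProduct_add, smul_dotProduct,
      dotProduct_smul, smul_eq_mul]
    rw [dotProduct_comm z u]
    rw [huz, hzz]
    ring
  -- some coefficient nonzero
  have hex : ∃ i, cf i ≠ 0 := by
    by_contra h
    push_neg at h
    apply hw0
    rw [← hcf]
    exact Finset.sum_eq_zero fun i _ => by rw [h i, zero_smul]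
  obtain ⟨i0, hi0⟩ := hex
  -- strict inequality
  have hkey : c * (w ⬝ᵥ w) < ∑ i, μ i.1 * cf i ^ 2 := by
    rw [h3, Finset.mul_sum]
    apply Finset.sum_lt_sum
    · intro i _
      exact mul_le_mul_of_nonneg_right (not_le.mp i.2).le (sq_nonneg _)
    · refine ⟨i0, Finset.mem_univ i0, ?_⟩
      have hlt := not_le.mp i0.2
      have hsq : 0 < cf i0 ^ 2 := by positivity
      exact mul_lt_mul_of_pos_right hlt hsq
  have hfinal : b ^ 2 * c ≤ c * (w ⬝ᵥ w) := by
    rw [h4]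
    nlinarith [mul_nonneg (mul_nonneg hc (sq_nonneg a)) huu.le]
  rw [← h2, h1] at hkey
  linarith

/-- For a stochastic matrix `T` in 2×2 block form with diagonal blocks of sizes `k` and
`n - k`, and `z = (1/√(nk(n-k))) [(n-k)𝟏; -k𝟏]`: `‖z‖₂ = 1`, `zᵀ𝟏 = 0`,
`‖(I-T)z‖₂² = (n/(k(n-k)))(‖T₁₂𝟏‖₂² + ‖T₂₁𝟏‖₂²)`, and hence the second smallest
singular value `σ` of `I - T` satisfies `σ² ≤ (n/(k(n-k)))(‖T₁₂𝟏‖₂² + ‖T₂₁𝟏‖₂²)`. -/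
theorem stmt19 {n k : ℕ} (hk : 0 < k) (hkn : k < n)
    (T : Matrix (Fin n) (Fin n) ℝ)
    (hTpos : ∀ i j, 0 ≤ T i j) (hTrow : ∀ i, ∑ j, T i j = 1)
    (z : Fin n → ℝ)
    (hz : z = fun i : Fin n =>
      if (i : ℕ) < k then ((n : ℝ) - k) / Real.sqrt (n * k * ((n : ℝ) - k))
      else -(k : ℝ) / Real.sqrt (n * k * ((n : ℝ) - k))) :
    ∑ i, z i ^ 2 = 1 ∧
    ∑ i, z i = 0 ∧
    ∑ i, (Matrix.mulVec (1 - T) z i) ^ 2 =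
      (n : ℝ) / (k * ((n : ℝ) - k)) *
        ((∑ i ∈ Finset.univ.filter (fun i : Fin n => (i : ℕ) < k),
            (∑ j ∈ Finset.univ.filter (fun j : Fin n => k ≤ (j : ℕ)), T i j) ^ 2) +
          ∑ i ∈ Finset.univ.filter (fun i : Fin n => k ≤ (i : ℕ)),
            (∑ j ∈ Finset.univ.filter (fun j : Fin n => (j : ℕ) < k), T i j) ^ 2) ∧
    secondSmallestSV (1 - T) ^ 2 ≤
      (n : ℝ) / (k * ((n : ℝ) - k)) *
        ((∑ i ∈ Finset.univ.filter (fun i : Fin n => (i : ℕ) < k),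
            (∑ j ∈ Finset.univ.filter (fun j : Fin n => k ≤ (j : ℕ)), T i j) ^ 2) +
          ∑ i ∈ Finset.univ.filter (fun i : Fin n => k ≤ (i : ℕ)),
            (∑ j ∈ Finset.univ.filter (fun j : Fin n => (j : ℕ) < k), T i j) ^ 2) := by
  have hkR : (0:ℝ) < k := by exact_mod_cast hk
  have hknR : (k:ℝ) < n := by exact_mod_cast hkn
  have hnR : (0:ℝ) < n := lt_trans hkR hknR
  have hnkR : (0:ℝ) < (n:ℝ) - k := by linarith
  set s : ℝ := Real.sqrt ((n:ℝ) * k * ((n:ℝ) - k)) with hs_def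
  have hs2 : s ^ 2 = (n:ℝ) * k * ((n:ℝ) - k) := Real.sq_sqrt (by positivity)
  have hs0 : 0 < s := Real.sqrt_pos.mpr (by positivity)
  have hzi : ∀ i : Fin n, z i =
      if (i : ℕ) < k then ((n:ℝ) - k) / s else -(k:ℝ) / s := by
    intro i; simp only [hz]
  have hck := aux_card_filter_lt n k hkn.le
  have hcg := aux_card_filter_ge n k hkn.le
  have hfn := aux_filter_not_lt n k
  have hcast : ((n - k : ℕ) : ℝ) = (n:ℝ) - k := by
    rw [Nat.cast_sub hkn.le]
  -- part 1
  have part1 : ∑ i, z i ^ 2 = 1 := by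
    rw [← Finset.sum_filter_add_sum_filter_not Finset.univ
      (fun i : Fin n => (i : ℕ) < k) (fun i => z i ^ 2), hfn]
    have e1 : ∑ i ∈ Finset.univ.filter (fun i : Fin n => (i : ℕ) < k), z i ^ 2
        = k * (((n:ℝ) - k) / s) ^ 2 := by
      calc ∑ i ∈ Finset.univ.filter (fun i : Fin n => (i : ℕ) < k), z i ^ 2
          = ∑ _i ∈ Finset.univ.filter (fun i : Fin n => (i : ℕ) < k),
              (((n:ℝ) - k) / s) ^ 2 :=
            Finset.sum_congr rfl fun i hi => by
              rw [hzi i, if_pos (Finset.mem_filter.mp hi).2]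
        _ = _ := by rw [Finset.sum_const, hck, nsmul_eq_mul]
    have e2 : ∑ i ∈ Finset.univ.filter (fun i : Fin n => k ≤ (i : ℕ)), z i ^ 2
        = ((n:ℝ) - k) * (-(k:ℝ) / s) ^ 2 := by
      calc ∑ i ∈ Finset.univ.filter (fun i : Fin n => k ≤ (i : ℕ)), z i ^ 2
          = ∑ _i ∈ Finset.univ.filter (fun i : Fin n => k ≤ (i : ℕ)),
              (-(k:ℝ) / s) ^ 2 :=
            Finset.sum_congr rfl fun i hi => by
              rw [hzi i, if_neg (not_lt.mpr (Finset.mem_filter.mp hi).2)]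
        _ = _ := by rw [Finset.sum_const, hcg, nsmul_eq_mul, hcast]
    rw [e1, e2, div_pow, div_pow, hs2]
    field_simp
    ring
  -- part 2
  have part2 : ∑ i, z i = 0 := by
    rw [← Finset.sum_filter_add_sum_filter_not Finset.univ
      (fun i : Fin n => (i : ℕ) < k) (fun i => z i), hfn]
    have e1 : ∑ i ∈ Finset.univ.filter (fun i : Fin n => (i : ℕ) < k), z i
        = k * (((n:ℝ) - k) / s) := by
      calc ∑ i ∈ Finset.univ.filter (fun i : Fin n => (i : ℕ) < k), z i
          = ∑ _i ∈ Finset.univ.filter (fun i : Fin n => (i : ℕ) < k),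
              (((n:ℝ) - k) / s) :=
            Finset.sum_congr rfl fun i hi => by
              rw [hzi i, if_pos (Finset.mem_filter.mp hi).2]
        _ = _ := by rw [Finset.sum_const, hck, nsmul_eq_mul]
    have e2 : ∑ i ∈ Finset.univ.filter (fun i : Fin n => k ≤ (i : ℕ)), z i
        = ((n:ℝ) - k) * (-(k:ℝ) / s) := by
      calc ∑ i ∈ Finset.univ.filter (fun i : Fin n => k ≤ (i : ℕ)), z i
          = ∑ _i ∈ Finset.univ.filter (fun i : Fin n => k ≤ (i : ℕ)),
              (-(k:ℝ) / s) :=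
            Finset.sum_congr rfl fun i hi => by
              rw [hzi i, if_neg (not_lt.mpr (Finset.mem_filter.mp hi).2)]
        _ = _ := by rw [Finset.sum_const, hcg, nsmul_eq_mul, hcast]
    rw [e1, e2]
    have : (k:ℝ) * (((n:ℝ) - k) / s) + ((n:ℝ) - k) * (-(k:ℝ) / s)
        = ((k:ℝ) * ((n:ℝ) - k) + ((n:ℝ) - k) * (-(k:ℝ))) / s := by ring
    rw [this, show (k:ℝ) * ((n:ℝ) - k) + ((n:ℝ) - k) * (-(k:ℝ)) = 0 from by ring,
      zero_div]
  -- part 3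
  have hLR : ∀ i, (∑ j ∈ Finset.univ.filter (fun j : Fin n => (j : ℕ) < k), T i j)
      + (∑ j ∈ Finset.univ.filter (fun j : Fin n => k ≤ (j : ℕ)), T i j) = 1 := by
    intro i
    rw [← hfn, Finset.sum_filter_add_sum_filter_not, hTrow i]
  have hmv : ∀ i : Fin n, Matrix.mulVec (1 - T) z i =
      if (i : ℕ) < k then
        (∑ j ∈ Finset.univ.filter (fun j : Fin n => k ≤ (j : ℕ)), T i j) * ((n:ℝ) / s)
      else
        -((∑ j ∈ Finset.univ.filter (fun j : Fin n => (j : ℕ) < k), T i j) * ((n:ℝ) / s)) := by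
    intro i
    have hTz : T.mulVec z i =
        (∑ j ∈ Finset.univ.filter (fun j : Fin n => (j : ℕ) < k), T i j) * (((n:ℝ) - k) / s)
        + (∑ j ∈ Finset.univ.filter (fun j : Fin n => k ≤ (j : ℕ)), T i j) * (-(k:ℝ) / s) := by
      show (∑ j, T i j * z j) = _
      rw [← Finset.sum_filter_add_sum_filter_not Finset.univ
        (fun j : Fin n => (j : ℕ) < k) (fun j => T i j * z j), hfn]
      congr 1
      · rw [Finset.sum_mul]
        exact Finset.sum_congr rfl fun j hj => by
          rw [hzi j, if_pos (Finset.mem_filter.mp hj).2]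
      · rw [Finset.sum_mul]
        exact Finset.sum_congr rfl fun j hj => by
          rw [hzi j, if_neg (not_lt.mpr (Finset.mem_filter.mp hj).2)]
    have hsub : Matrix.mulVec (1 - T) z i = z i - T.mulVec z i := by
      rw [Matrix.sub_mulVec, Matrix.one_mulVec]; rfl
    rw [hsub, hTz, hzi i]
    by_cases h : (i : ℕ) < k
    · rw [if_pos h, if_pos h]
      linear_combination (-(((n:ℝ) - k) / s)) * hLR i
    · rw [if_neg h, if_neg h]
      linear_combination ((k:ℝ) / s) * hLR i
  have part3 : ∑ i, (Matrix.mulVec (1 - T) z i) ^ 2 =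
      (n : ℝ) / (k * ((n : ℝ) - k)) *
        ((∑ i ∈ Finset.univ.filter (fun i : Fin n => (i : ℕ) < k),
            (∑ j ∈ Finset.univ.filter (fun j : Fin n => k ≤ (j : ℕ)), T i j) ^ 2) +
          ∑ i ∈ Finset.univ.filter (fun i : Fin n => k ≤ (i : ℕ)),
            (∑ j ∈ Finset.univ.filter (fun j : Fin n => (j : ℕ) < k), T i j) ^ 2) := by
    have hsplit : ∑ i, (Matrix.mulVec (1 - T) z i) ^ 2 =
        (∑ i ∈ Finset.univ.filter (fun i : Fin n => (i : ℕ) < k),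
          ((∑ j ∈ Finset.univ.filter (fun j : Fin n => k ≤ (j : ℕ)), T i j) * ((n:ℝ) / s)) ^ 2)
        + ∑ i ∈ Finset.univ.filter (fun i : Fin n => k ≤ (i : ℕ)),
          ((∑ j ∈ Finset.univ.filter (fun j : Fin n => (j : ℕ) < k), T i j) * ((n:ℝ) / s)) ^ 2 := by
      rw [← Finset.sum_filter_add_sum_filter_not Finset.univ
        (fun i : Fin n => (i : ℕ) < k) (fun i => (Matrix.mulVec (1 - T) z i) ^ 2), hfn]
      congr 1
      · exact Finset.sum_congr rfl fun i hi => by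
          rw [hmv i, if_pos (Finset.mem_filter.mp hi).2]
      · exact Finset.sum_congr rfl fun i hi => by
          rw [hmv i, if_neg (not_lt.mpr (Finset.mem_filter.mp hi).2)]; ring
    rw [hsplit]
    have hns : ((n:ℝ) / s) ^ 2 = (n:ℝ) / (k * ((n:ℝ) - k)) := by
      rw [div_pow, hs2]
      rw [div_eq_div_iff (by positivity) (by positivity)]
      ring
    simp only [mul_pow]
    rw [← Finset.sum_mul, ← Finset.sum_mul, hns]
    ring
  refine ⟨part1, part2, part3, ?_⟩
  set C : ℝ := (n : ℝ) / (k * ((n : ℝ) - k)) *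
      ((∑ i ∈ Finset.univ.filter (fun i : Fin n => (i : ℕ) < k),
          (∑ j ∈ Finset.univ.filter (fun j : Fin n => k ≤ (j : ℕ)), T i j) ^ 2) +
        ∑ i ∈ Finset.univ.filter (fun i : Fin n => k ≤ (i : ℕ)),
          (∑ j ∈ Finset.univ.filter (fun j : Fin n => (j : ℕ) < k), T i j) ^ 2) with hC
  have hC0 : 0 ≤ C := by rw [← part3]; positivity
  have huu : (0:ℝ) < (fun _ : Fin n => (1:ℝ)) ⬝ᵥ (fun _ : Fin n => (1:ℝ)) := by
    have h : (fun _ : Fin n => (1:ℝ)) ⬝ᵥ (fun _ : Fin n => (1:ℝ)) = n := by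
      simp [dotProduct]
    rw [h]; exact hnR
  have hzz : z ⬝ᵥ z = 1 := by
    have h : z ⬝ᵥ z = ∑ i, z i ^ 2 := by simp [dotProduct, pow_two]
    rw [h, part1]
  have huz : (fun _ : Fin n => (1:ℝ)) ⬝ᵥ z = 0 := by
    have h : (fun _ : Fin n => (1:ℝ)) ⬝ᵥ z = ∑ i, z i := by simp [dotProduct]
    rw [h, part2]
  have hAu : (1 - T).mulVec (fun _ : Fin n => (1:ℝ)) = 0 := by
    funext i
    have h1 : T.mulVec (fun _ : Fin n => (1:ℝ)) i = 1 := by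
      show (∑ j, T i j * 1) = 1
      simp [hTrow i]
    have h2 : (1 - T).mulVec (fun _ : Fin n => (1:ℝ)) i
        = (fun _ : Fin n => (1:ℝ)) i - T.mulVec (fun _ : Fin n => (1:ℝ)) i := by
      rw [Matrix.sub_mulVec, Matrix.one_mulVec]; rfl
    rw [h2, h1]; simp
  have hAz : ((1 - T).mulVec z) ⬝ᵥ ((1 - T).mulVec z) = C := by
    have h : ((1 - T).mulVec z) ⬝ᵥ ((1 - T).mulVec z)
        = ∑ i, (Matrix.mulVec (1 - T) z i) ^ 2 := by
      simp [dotProduct, pow_two]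
    rw [h, part3]
  obtain ⟨i, j, hij, hmi, hmj⟩ :=
    aux_two_small_eigs (1 - T) (fun _ => (1:ℝ)) z C hC0 huu hzz huz hAu hAz
  have hn2 : 2 ≤ n := by omega
  set L := List.ofFn (fun i : Fin n =>
      Real.sqrt ((Matrix.isHermitian_mul_conjTranspose_self (1 - T)).eigenvalues i)) with hL
  have hlen : 2 ≤ L.length := by rw [hL, List.length_ofFn]; exact hn2
  have hnn : ∀ x ∈ L, 0 ≤ x := by
    intro x hx
    rw [hL, List.mem_ofFn] at hx
    obtain ⟨i', hi'⟩ := hx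
    rw [← hi']; exact Real.sqrt_nonneg _
  have hcount : 2 ≤ L.countP (fun x => decide (x ≤ Real.sqrt C)) := by
    rw [hL, List.ofFn_eq_map, List.countP_map, List.countP_eq_length_filter]
    refine aux_two_le_length ((List.nodup_finRange n).filter _) ?_ ?_ hij
    · rw [List.mem_filter]
      refine ⟨List.mem_finRange i, ?_⟩
      simpa using Real.sqrt_le_sqrt hmi
    · rw [List.mem_filter]
      refine ⟨List.mem_finRange j, ?_⟩
      simpa using Real.sqrt_le_sqrt hmj
  have hfin := aux_getD_one_mergeSort hlen hnn hcount
  have hunfold : secondSmallestSV (1 - T)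
      = (L.mergeSort (fun a b => decide (a ≤ b))).getD 1 0 := rfl
  rw [hunfold]
  calc ((L.mergeSort (fun a b => decide (a ≤ b))).getD 1 0) ^ 2
      ≤ (Real.sqrt C) ^ 2 := pow_le_pow_left₀ hfin.1 hfin.2 2
    _ = C := Real.sq_sqrt hC0
end
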